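/- arXiv:1909.04483 — 4 statements merged into one kernel-verified Lean document; each statement's English description precedes it below -/
import Mathlib

section
/- Let X be a length space, I ⊆ ℝ a closed nondegenerate interval, λ > 1, and for each j ∈ ℕ let f_j : I → ℝ be measurable with 1/λ ≤ f_j(t) ≤ λ for all t ∈ I. Then for every j ∈ ℕ and all p ≠ q in I × X: 1/λ ≤ d̂_{f_j}(p,q) / d̂_σ(p,q) ≤ λ, where d̂_{f_j} is the null distance of the warped product I ×_{f_j} X and d̂_σ is the null distance of the Lorentzian product I × X. -/
open MeasureTheory

/-- Causal relation of the warped product `I ×_f X`; for `f ≡ 1` it is the causal relation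
of the Lorentzian product: `(s,x) ≼ (t,y)` iff `s ≤ t` and `d(x,y) ≤ t − s`. -/
def WPCausal {X : Type*} [MetricSpace X] (f : ℝ → ℝ) (p q : ℝ × X) : Prop :=
  p.1 ≤ q.1 ∧
    ENNReal.ofReal (dist p.2 q.2) ≤ ∫⁻ u in Set.Ioc p.1 q.1, ENNReal.ofReal ((f u)⁻¹)

/-- `σ` is a piecewise causal chain with `n+1` segments from `p` to `q` inside `I × X`. -/
def WPChain {X : Type*} [MetricSpace X] (I : Set ℝ) (f : ℝ → ℝ) (p q : ℝ × X) (n : ℕ)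
    (σ : ℕ → ℝ × X) : Prop :=
  σ 0 = p ∧ σ (n + 1) = q ∧ (∀ i ≤ n + 1, (σ i).1 ∈ I) ∧
    ∀ i ≤ n, WPCausal f (σ i) (σ (i + 1)) ∨ WPCausal f (σ (i + 1)) (σ i)

/-- The null distance of the warped product `I ×_f X`. -/
noncomputable def nullDist {X : Type*} [MetricSpace X] (I : Set ℝ) (f : ℝ → ℝ)
    (p q : ℝ × X) : ℝ :=
  sInf { r | ∃ n σ, WPChain I f p q n σ ∧
    r = ∑ i ∈ Finset.range (n + 1), |(σ (i + 1)).1 - (σ i).1| }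


lemma lint_lower (f : ℝ → ℝ) (mu : ℝ) (hmu : 0 < mu) (s t : ℝ) (hst : s ≤ t)
    (hf : ∀ u ∈ Set.Ioc s t, 1 / mu ≤ f u ∧ f u ≤ mu) :
    ENNReal.ofReal ((t - s) / mu) ≤ ∫⁻ u in Set.Ioc s t, ENNReal.ofReal ((f u)⁻¹) := by
  have h1 : ∫⁻ _ in Set.Ioc s t, ENNReal.ofReal mu⁻¹ ≤
      ∫⁻ u in Set.Ioc s t, ENNReal.ofReal ((f u)⁻¹) := by
    refine setLIntegral_mono' measurableSet_Ioc fun u hu => ?_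
    have h3 : 0 < f u := lt_of_lt_of_le (by positivity) (hf u hu).1
    exact ENNReal.ofReal_le_ofReal (inv_anti₀ h3 (hf u hu).2)
  calc ENNReal.ofReal ((t - s) / mu)
      = ENNReal.ofReal mu⁻¹ * volume (Set.Ioc s t) := by
        rw [Real.volume_Ioc, ← ENNReal.ofReal_mul (by positivity)]
        ring_nf
    _ = ∫⁻ _ in Set.Ioc s t, ENNReal.ofReal mu⁻¹ := (setLIntegral_const _ _).symm
    _ ≤ _ := h1

lemma lint_upper (f : ℝ → ℝ) (mu : ℝ) (hmu : 0 < mu) (s t : ℝ) (hst : s ≤ t)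
    (hf : ∀ u ∈ Set.Ioc s t, 1 / mu ≤ f u ∧ f u ≤ mu) :
    (∫⁻ u in Set.Ioc s t, ENNReal.ofReal ((f u)⁻¹)) ≤ ENNReal.ofReal (mu * (t - s)) := by
  have h1 : (∫⁻ u in Set.Ioc s t, ENNReal.ofReal ((f u)⁻¹)) ≤
      ∫⁻ _ in Set.Ioc s t, ENNReal.ofReal mu := by
    refine setLIntegral_mono' measurableSet_Ioc fun u hu => ?_
    refine ENNReal.ofReal_le_ofReal ?_
    have h2 : mu⁻¹ ≤ f u := by rw [← one_div]; exact (hf u hu).1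
    have := inv_anti₀ (by positivity : (0:ℝ) < mu⁻¹) h2
    rwa [inv_inv] at this
  calc (∫⁻ u in Set.Ioc s t, ENNReal.ofReal ((f u)⁻¹)) ≤ _ := h1
    _ = ENNReal.ofReal mu * volume (Set.Ioc s t) := setLIntegral_const _ _
    _ = ENNReal.ofReal (mu * (t - s)) := by
        rw [Real.volume_Ioc, ← ENNReal.ofReal_mul hmu.le]

lemma nd_mem_lower {X : Type*} [MetricSpace X] {I : Set ℝ} (hIc : I.OrdConnected)
    {f : ℝ → ℝ} {mu : ℝ} (hmu : 0 < mu) (hfI : ∀ t ∈ I, 1 / mu ≤ f t ∧ f t ≤ mu)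
    (p q : ℝ × X) {r : ℝ}
    (hr : r ∈ { r | ∃ n σ, WPChain I f p q n σ ∧
      r = ∑ i ∈ Finset.range (n + 1), |(σ (i + 1)).1 - (σ i).1| }) :
    max |q.1 - p.1| (dist p.2 q.2 / mu) ≤ r := by
  obtain ⟨n, σ, ⟨h0, hn, hmem, hc⟩, rfl⟩ := hr
  -- per-segment spatial bound
  have key : ∀ i ≤ n, dist (σ i).2 (σ (i + 1)).2 ≤ mu * |(σ (i + 1)).1 - (σ i).1| := by
    intro i hi
    have hIsub : ∀ s t : ℝ, s ∈ I → t ∈ I → ∀ u ∈ Set.Ioc s t, 1 / mu ≤ f u ∧ f u ≤ mu := by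
      intro s t hs ht u hu
      exact hfI u (hIc.out hs ht (Set.Ioc_subset_Icc_self hu))
    have hmi : (σ i).1 ∈ I := hmem i (le_trans hi (Nat.le_succ n))
    have hmi1 : (σ (i + 1)).1 ∈ I := hmem (i + 1) (Nat.succ_le_succ hi)
    rcases hc i hi with ⟨hle, hint⟩ | ⟨hle, hint⟩
    · have := le_trans hint (lint_upper f mu hmu _ _ hle (hIsub _ _ hmi hmi1))
      rw [ENNReal.ofReal_le_ofReal_iff (by nlinarith)] at this
      calc dist (σ i).2 (σ (i + 1)).2 ≤ mu * ((σ (i + 1)).1 - (σ i).1) := this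
        _ ≤ mu * |(σ (i + 1)).1 - (σ i).1| :=
          mul_le_mul_of_nonneg_left (le_abs_self _) hmu.le
    · have := le_trans hint (lint_upper f mu hmu _ _ hle (hIsub _ _ hmi1 hmi))
      rw [ENNReal.ofReal_le_ofReal_iff (by nlinarith)] at this
      rw [dist_comm]
      calc dist (σ (i + 1)).2 (σ i).2 ≤ mu * ((σ i).1 - (σ (i + 1)).1) := this
        _ ≤ mu * |(σ (i + 1)).1 - (σ i).1| := by
          rw [abs_sub_comm]
          exact mul_le_mul_of_nonneg_left (le_abs_self _) hmu.le
  apply max_le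
  · have e1 : ∑ i ∈ Finset.range (n + 1), ((σ (i + 1)).1 - (σ i).1) = q.1 - p.1 := by
      rw [Finset.sum_range_sub (fun i => (σ i).1), h0, hn]
    have := Finset.abs_sum_le_sum_abs
      (fun i => (σ (i + 1)).1 - (σ i).1) (Finset.range (n + 1))
    rw [e1] at this
    exact this
  · rw [div_le_iff₀ hmu]
    have e2 : dist p.2 q.2 = dist (σ 0).2 (σ (n + 1)).2 := by rw [h0, hn]
    have e3 := dist_le_range_sum_dist (fun i => (σ i).2) (n + 1)
    have e4 : ∑ i ∈ Finset.range (n + 1), dist (σ i).2 (σ (i + 1)).2 ≤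
        ∑ i ∈ Finset.range (n + 1), mu * |(σ (i + 1)).1 - (σ i).1| :=
      Finset.sum_le_sum fun i hi => key i (Nat.lt_succ_iff.mp (Finset.mem_range.mp hi))
    have e5 : ∑ i ∈ Finset.range (n + 1), mu * |(σ (i + 1)).1 - (σ i).1| =
        (∑ i ∈ Finset.range (n + 1), |(σ (i + 1)).1 - (σ i).1|) * mu := by
      rw [← Finset.mul_sum, mul_comm]
    rw [e2]
    exact le_trans e3 (le_trans e4 (le_of_eq e5))


lemma nd_set_symm {X : Type*} [MetricSpace X] (I : Set ℝ) (f : ℝ → ℝ) (p q : ℝ × X) :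
    { r | ∃ n σ, WPChain I f p q n σ ∧
      r = ∑ i ∈ Finset.range (n + 1), |(σ (i + 1)).1 - (σ i).1| } ⊆
    { r | ∃ n σ, WPChain I f q p n σ ∧
      r = ∑ i ∈ Finset.range (n + 1), |(σ (i + 1)).1 - (σ i).1| } := by
  rintro r ⟨n, σ, ⟨h0, hn, hmem, hc⟩, rfl⟩
  refine ⟨n, fun i => σ (n + 1 - i), ⟨?_, ?_, ?_, ?_⟩, ?_⟩
  · simpa using hn
  · simpa using h0
  · intro i _
    exact hmem (n + 1 - i) (Nat.sub_le _ _)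
  · intro i hi
    have e1 : n + 1 - i = (n - i) + 1 := by omega
    have e2 : n + 1 - (i + 1) = n - i := by omega
    simp only [e1, e2]
    exact (hc (n - i) (Nat.sub_le _ _)).symm
  · rw [← Finset.sum_range_reflect (fun i => |(σ (i + 1)).1 - (σ i).1|) (n + 1)]
    refine Finset.sum_congr rfl fun i hi => ?_
    have hi' : i ≤ n := Nat.lt_succ_iff.mp (Finset.mem_range.mp hi)
    have e1 : n + 1 - 1 - i = n - i := by omega
    have e2 : n + 1 - (i + 1) = n - i := by omega
    have e3 : n + 1 - i = (n - i) + 1 := by omega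
    simp only [e1, e2, e3]
    rw [abs_sub_comm]

lemma subdiv {X : Type*} [MetricSpace X]
    (hX : ∀ x y : X, ∀ ε : ℝ, 0 < ε →
      ∃ z : X, max (dist x z) (dist z y) ≤ dist x y / 2 + ε) :
    ∀ k : ℕ, ∀ x y : X, ∀ ε : ℝ, 0 < ε → ∃ z : ℕ → X, z 0 = x ∧ z (2 ^ k) = y ∧
      ∀ i < 2 ^ k, dist (z i) (z (i + 1)) ≤ dist x y / 2 ^ k + ε := by
  intro k
  induction k with
  | zero =>
    intro x y ε hε
    refine ⟨fun i => if i = 0 then x else y, rfl, rfl, ?_⟩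
    intro i hi
    interval_cases i
    simp [le_of_lt hε]
  | succ k ih =>
    intro x y ε hε
    obtain ⟨z, hz0, hzN, hzd⟩ := ih x y (ε / 2) (by positivity)
    have hm : ∀ j : ℕ, ∃ m : X, max (dist (z j) m) (dist m (z (j + 1))) ≤
        dist (z j) (z (j + 1)) / 2 + ε / 4 := fun j => hX _ _ _ (by positivity)
    choose m hm using hm
    refine ⟨fun i => if 2 ∣ i then z (i / 2) else m (i / 2), ?_, ?_, ?_⟩
    · simp [hz0]
    · have : (2:ℕ) ∣ 2 ^ (k + 1) := dvd_pow_self 2 (Nat.succ_ne_zero k)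
      simp only [this, if_pos]
      have e : 2 ^ (k + 1) / 2 = 2 ^ k := by
        rw [pow_succ]; omega
      rw [e]; exact hzN
    · intro i hi
      have hstep : ∀ j < 2 ^ k, dist (z j) (z (j + 1)) / 2 + ε / 4 ≤
          dist x y / 2 ^ (k + 1) + ε := by
        intro j hj
        have h1 := hzd j hj
        have e : dist x y / 2 ^ (k + 1) = dist x y / 2 ^ k / 2 := by
          rw [pow_succ, div_div]
        rw [e]
        linarith
      rcases Nat.even_or_odd i with ⟨j, hj⟩ | ⟨j, hj⟩
      · subst hj
        have hj2 : j < 2 ^ k := by rw [pow_succ] at hi; omega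
        have e1 : (2:ℕ) ∣ j + j := ⟨j, by ring⟩
        have e2 : ¬ (2:ℕ) ∣ j + j + 1 := by omega
        have e3 : (j + j) / 2 = j := by omega
        have e4 : (j + j + 1) / 2 = j := by omega
        simp only [e1, e2, if_pos, if_neg, if_true, if_false, e3, e4]
        exact le_trans (le_trans (le_max_left _ _) (hm j)) (hstep j hj2)
      · subst hj
        have hj2 : j < 2 ^ k := by rw [pow_succ] at hi; omega
        have e2 : ¬ (2:ℕ) ∣ 2 * j + 1 := by omega
        have e1 : (2:ℕ) ∣ 2 * j + 1 + 1 := by omega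
        have e3 : (2 * j + 1) / 2 = j := by omega
        have e4 : (2 * j + 1 + 1) / 2 = j + 1 := by omega
        simp only [e1, e2, if_pos, if_neg, if_true, if_false, e3, e4]
        exact le_trans (le_trans (le_max_right _ _) (hm j)) (hstep j hj2)

/-- Greedy time-zigzag: go up unless we are more than `h i` above `t + w*(h i) - h i`… -/
noncomputable def zig (t w : ℝ) (h : ℕ → ℝ) (s : ℝ) : ℕ → ℝ
  | 0 => s
  | i + 1 =>
    if t + w * h i < zig t w h s i then zig t w h s i - h i else zig t w h s i + h i

lemma zig_inv (t w : ℝ) (hw : w = 1 ∨ w = -1) (h : ℕ → ℝ) (s H : ℝ) (hst : s ≤ t)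
    (hH : 0 ≤ H) (N : ℕ) (hh : ∀ i < N, 0 ≤ h i ∧ h i ≤ H) :
    ∀ i ≤ N,
      (t - 2 * H ≤ zig t w h s i ∨ zig t w h s i = s + ∑ j ∈ Finset.range i, h j) ∧
      zig t w h s i ≤ t + 2 * H ∧
      (w = -1 → zig t w h s i ≤ t) ∧
      (w = 1 → s ≤ zig t w h s i) := by
  intro i
  induction i with
  | zero =>
    intro _
    refine ⟨Or.inr (by simp [zig]), by simp [zig]; linarith, fun _ => by simp [zig, hst],
      fun _ => by simp [zig]⟩
  | succ i ih =>
    intro hiN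
    have hi : i < N := hiN
    obtain ⟨P1, P2, P3, P4⟩ := ih (le_of_lt hi)
    obtain ⟨hh0, hhH⟩ := hh i hi
    set u := zig t w h s i with hu
    by_cases hcond : t + w * h i < u
    · -- down step
      have hstep : zig t w h s (i + 1) = u - h i := by rw [zig, if_pos hcond]
      have hdown : t - 2 * H ≤ u - h i := by
        rcases hw with hw1 | hw1 <;> rw [hw1] at hcond <;> nlinarith
      refine ⟨Or.inl (by rw [hstep]; exact hdown), by rw [hstep]; linarith, ?_, ?_⟩
      · intro hw1
        rw [hstep]
        have := P3 hw1
        linarith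
      · intro hw1
        rw [hstep]
        rw [hw1] at hcond
        linarith
    · -- up step
      have hstep : zig t w h s (i + 1) = u + h i := by rw [zig, if_neg hcond]
      push_neg at hcond
      have hup : u + h i ≤ t + w * h i + h i := by linarith
      refine ⟨?_, ?_, ?_, ?_⟩
      · rcases P1 with P1 | P1
        · exact Or.inl (by rw [hstep]; linarith)
        · refine Or.inr ?_
          rw [hstep, P1, Finset.sum_range_succ]
          ring
      · rw [hstep]
        rcases hw with hw1 | hw1 <;> rw [hw1] at hcond <;> nlinarith
      · intro hw1
        rw [hw1] at hcond
        rw [hstep]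
        linarith
      · intro hw1
        have := P4 hw1
        rw [hstep]
        linarith

set_option maxHeartbeats 2000000 in
lemma nd_chain_exists {X : Type*} [MetricSpace X]
    (hX : ∀ x y : X, ∀ ε : ℝ, 0 < ε →
      ∃ z : X, max (dist x z) (dist z y) ≤ dist x y / 2 + ε)
    {I : Set ℝ} (hIc : I.OrdConnected)
    {a b : ℝ} (ha : a ∈ I) (hb : b ∈ I) (hab : a < b)
    {f : ℝ → ℝ} {mu : ℝ} (hmu : 1 ≤ mu) (hfI : ∀ t ∈ I, 1 / mu ≤ f t ∧ f t ≤ mu)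
    (p q : ℝ × X) (hp : p.1 ∈ I) (hq : q.1 ∈ I) (hpq : p.1 ≤ q.1)
    (ε : ℝ) (hε : 0 < ε) :
    ∃ r ∈ { r | ∃ n σ, WPChain I f p q n σ ∧
      r = ∑ i ∈ Finset.range (n + 1), |(σ (i + 1)).1 - (σ i).1| },
      r ≤ mu * max (q.1 - p.1) (dist p.2 q.2) + ε := by
  have hmu0 : (0:ℝ) < mu := lt_of_lt_of_le one_pos hmu
  set s := p.1
  set t := q.1
  set x := p.2
  set y := q.2
  set d := dist x y with hd
  have hd0 : 0 ≤ d := dist_nonneg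
  set T := t - s with hT
  have hT0 : 0 ≤ T := by simp [hT]; linarith [hpq]
  set c : ℝ := (b - a) / 2 with hc
  have hc0 : 0 < c := by simp [hc]; linarith
  -- window
  obtain ⟨w, hw, hwin⟩ : ∃ w : ℝ, (w = 1 ∨ w = -1) ∧ t + w * c ∈ I := by
    rcases le_or_gt t ((a + b) / 2) with hcase | hcase
    · refine ⟨1, Or.inl rfl, hIc.out hq hb ⟨by linarith, by rw [hc]; linarith⟩⟩
    · refine ⟨-1, Or.inr rfl, hIc.out ha hq ⟨by rw [hc]; linarith, by linarith⟩⟩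
  -- parameters
  set δ : ℝ := min (c / (2 * mu)) (ε / (4 * mu)) with hδ
  have hδ0 : 0 < δ := lt_min (by positivity) (by positivity)
  set ε₁ : ℝ := ε / (2 * mu) with hε₁
  have hε₁0 : 0 < ε₁ := by positivity
  obtain ⟨k, hk⟩ : ∃ k : ℕ, (d + ε₁) / δ < 2 ^ k := pow_unbounded_of_one_lt _ one_lt_two
  set N : ℕ := 2 ^ k with hN
  have hN0 : (0:ℝ) < (N:ℝ) := by positivity
  have hdN : (d + ε₁) / (N:ℝ) ≤ δ := by
    have h2 : d + ε₁ ≤ 2 ^ k * δ := by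
      rw [div_lt_iff₀ hδ0] at hk
      linarith
    rw [div_le_iff₀ hN0]
    have hNc : ((N:ℕ):ℝ) = 2 ^ k := by rw [hN]; push_cast; ring
    rw [hNc]
    linarith
  obtain ⟨z, hz0, hzN, hzd⟩ := subdiv hX k x y (ε₁ / N) (by positivity)
  have hzd' : ∀ i < N, dist (z i) (z (i + 1)) ≤ δ := by
    intro i hi
    calc dist (z i) (z (i + 1)) ≤ d / 2 ^ k + ε₁ / N := hzd i hi
      _ = (d + ε₁) / N := by rw [hN]; push_cast; ring
      _ ≤ δ := hdN
  set h : ℕ → ℝ := fun i => mu * dist (z i) (z (i + 1)) with hh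
  set H : ℝ := mu * δ with hH
  have hH0 : 0 ≤ H := by positivity
  have hhb : ∀ i < N, 0 ≤ h i ∧ h i ≤ H := by
    intro i hi
    exact ⟨by positivity, mul_le_mul_of_nonneg_left (hzd' i hi) hmu0.le⟩
  set u : ℕ → ℝ := zig t w h s with hu
  have hinv := zig_inv t w hw h s H hpq hH0 N hhb
  simp only [← hu] at hinv
  -- membership of times
  have hmemI : ∀ i ≤ N, u i ∈ I := by
    intro i hi
    obtain ⟨P1, P2, P3, P4⟩ := hinv i hi
    have h2Hc : 2 * H ≤ c := by
      have : δ ≤ c / (2 * mu) := min_le_left _ _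
      rw [hH]
      rw [le_div_iff₀ (by positivity)] at this
      nlinarith
    rcases hw with hw1 | hw1
    · -- w = 1
      have hs_le : s ≤ u i := P4 hw1
      rcases le_or_gt (u i) t with h1 | h1
      · exact hIc.out hp hq ⟨hs_le, h1⟩
      · refine hIc.out hq (by rwa [hw1, one_mul] at hwin) ⟨h1.le, ?_⟩
        calc u i ≤ t + 2 * H := P2
          _ ≤ t + c := by linarith
    · -- w = -1
      have ht_le : u i ≤ t := P3 hw1
      rcases le_or_gt s (u i) with h1 | h1
      · exact hIc.out hp hq ⟨h1, ht_le⟩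
      · have hP1 : t - 2 * H ≤ u i := by
          rcases P1 with P1 | P1
          · exact P1
          · exfalso
            have : 0 ≤ ∑ j ∈ Finset.range i, h j :=
              Finset.sum_nonneg fun j hj =>
                (hhb j (lt_of_lt_of_le (Finset.mem_range.mp hj) hi)).1
            linarith
        have hwin' : t - c ∈ I := by
          have : t + (-1) * c = t - c := by ring
          rwa [hw1, this] at hwin
        exact hIc.out hwin' hq ⟨by linarith, ht_le⟩
  -- the chain
  set σ : ℕ → ℝ × X := fun i => if i ≤ N then (u i, z i) else q with hσ
  have hσi : ∀ i ≤ N, σ i = (u i, z i) := fun i hi => by rw [hσ]; simp [hi]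
  have hσN1 : σ (N + 1) = q := by rw [hσ]; simp
  -- step structure
  have hstep : ∀ i < N, (u (i + 1) = u i - h i ∧ t + w * h i < u i) ∨
      (u (i + 1) = u i + h i ∧ ¬ t + w * h i < u i) := by
    intro i _
    by_cases hcond : t + w * h i < u i
    · exact Or.inl ⟨by rw [hu]; rw [zig, if_pos hcond], hcond⟩
    · exact Or.inr ⟨by rw [hu]; rw [zig, if_neg hcond], hcond⟩
  have hNcast : ((N:ℕ):ℝ) = 2 ^ k := by rw [hN]; push_cast; ring
  have hIseg : ∀ s' t' : ℝ, s' ∈ I → t' ∈ I → ∀ v ∈ Set.Ioc s' t', 1 / mu ≤ f v ∧ f v ≤ mu :=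
    fun s' t' hs ht v hv => hfI v (hIc.out hs ht (Set.Ioc_subset_Icc_self hv))
  have hzNy : z N = y := by rw [hN]; exact hzN
  -- causality of each segment
  have hcaus : ∀ i ≤ N, WPCausal f (σ i) (σ (i + 1)) ∨ WPCausal f (σ (i + 1)) (σ i) := by
    intro i hi
    rcases eq_or_lt_of_le hi with heq | hilt
    · -- last segment: (u N, y) to q
      rw [heq, hσN1, hσi N le_rfl]
      have hdzero : ENNReal.ofReal (dist (z N) q.2) = 0 := by
        rw [hzNy]
        simp [dist_self]
        rfl
      rcases le_total (u N) t with h1 | h1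
      · exact Or.inl ⟨h1, by rw [hdzero]; exact zero_le⟩
      · exact Or.inr ⟨h1, by rw [dist_comm] at hdzero; rw [hdzero]; exact zero_le⟩
    · -- interior segment
      have hi1 : i + 1 ≤ N := hilt
      rw [hσi i hi, hσi (i + 1) hi1]
      have hdisteq : dist (z i) (z (i + 1)) = h i / mu := by
        rw [hh]
        field_simp
      rcases hstep i hilt with ⟨he, _⟩ | ⟨he, _⟩
      · -- down step : reversed causal
        refine Or.inr ⟨by rw [he]; simp; linarith [(hhb i hilt).1], ?_⟩
        have hint := lint_lower f mu hmu0 (u (i + 1)) (u i)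
          (by rw [he]; linarith [(hhb i hilt).1])
          (hIseg _ _ (hmemI (i + 1) hi1) (hmemI i hi))
        refine le_trans (le_of_eq ?_) hint
        congr 1
        rw [dist_comm, hdisteq, he]
        ring
      · -- up step : forward causal
        refine Or.inl ⟨by rw [he]; simp; linarith [(hhb i hilt).1], ?_⟩
        have hint := lint_lower f mu hmu0 (u i) (u (i + 1))
          (by rw [he]; linarith [(hhb i hilt).1])
          (hIseg _ _ (hmemI i hi) (hmemI (i + 1) hi1))
        refine le_trans (le_of_eq ?_) hint
        congr 1
        rw [hdisteq, he]
        ring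
  -- the chain conditions
  have hchain : WPChain I f p q N σ := by
    refine ⟨?_, hσN1, ?_, hcaus⟩
    · rw [hσi 0 (Nat.zero_le N), hz0]
      show (p.1, p.2) = p
      exact Prod.mk.eta
    · intro i hi
      rcases Nat.lt_succ_iff_lt_or_eq.mp (Nat.lt_succ_iff.mpr hi) with h1 | h1
      · have h2 : i ≤ N := Nat.lt_succ_iff.mp h1
        rw [hσi i h2]
        exact hmemI i h2
      · rw [h1, hσN1]
        exact hq
  -- the null length
  set S : ℝ := ∑ j ∈ Finset.range N, h j with hS
  have hterm : ∀ i < N, |(σ (i + 1)).1 - (σ i).1| = h i := by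
    intro i hi
    rw [hσi (i + 1) hi, hσi i hi.le]
    rcases hstep i hi with ⟨he, _⟩ | ⟨he, _⟩
    · have e : (u i - h i) - u i = -(h i) := by ring
      rw [he]
      show |u i - h i - u i| = h i
      rw [e, abs_neg, abs_of_nonneg (hhb i hi).1]
    · have e : (u i + h i) - u i = h i := by ring
      rw [he]
      show |u i + h i - u i| = h i
      rw [e, abs_of_nonneg (hhb i hi).1]
  refine ⟨_, ⟨N, σ, hchain, rfl⟩, ?_⟩
  have hsplit : ∑ i ∈ Finset.range (N + 1), |(σ (i + 1)).1 - (σ i).1| = S + |t - u N| := by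
    rw [Finset.sum_range_succ, hσN1, hσi N le_rfl]
    have e1 : ∑ i ∈ Finset.range N, |(σ (i + 1)).1 - (σ i).1| = S := by
      rw [hS]
      exact Finset.sum_congr rfl fun i hi => hterm i (Finset.mem_range.mp hi)
    rw [e1]
  rw [hsplit]
  -- bound S
  have hSb : S ≤ mu * (d + ε₁) := by
    rw [hS]
    have e1 : ∑ j ∈ Finset.range N, h j = mu * ∑ j ∈ Finset.range N, dist (z j) (z (j + 1)) := by
      rw [Finset.mul_sum]
    rw [e1]
    refine mul_le_mul_of_nonneg_left ?_ hmu0.le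
    calc ∑ j ∈ Finset.range N, dist (z j) (z (j + 1))
        ≤ ∑ j ∈ Finset.range N, (d + ε₁) / N := by
          refine Finset.sum_le_sum fun j hj => ?_
          have := hzd j (Finset.mem_range.mp hj)
          calc dist (z j) (z (j + 1)) ≤ d / 2 ^ k + ε₁ / N := this
            _ = (d + ε₁) / N := by rw [← hNcast]; ring
      _ = (N:ℝ) * ((d + ε₁) / N) := by
          rw [Finset.sum_const, Finset.card_range]
          simp
      _ = d + ε₁ := by field_simp
  have hS0 : 0 ≤ S := by
    rw [hS]
    exact Finset.sum_nonneg fun j hj => (hhb j (Finset.mem_range.mp hj)).1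
  -- bound final gap
  obtain ⟨P1, P2, P3, P4⟩ := hinv N le_rfl
  have hfin : |t - u N| ≤ max (T - S) (2 * H) := by
    rcases le_or_gt (t - 2 * H) (u N) with hcase | hcase
    · refine le_max_of_le_right (abs_le.mpr ⟨by linarith, by linarith⟩)
    · have hP1 : u N = s + S := by
        rcases P1 with P1 | P1
        · exact absurd P1 (not_le.mpr hcase)
        · rw [P1, ← hS]
      have e : t - u N = T - S := by rw [hP1, hT]; ring
      rw [e, abs_of_nonneg (by linarith [hH0])]
      exact le_max_left _ _
  -- put together
  have h2H : 2 * H ≤ ε / 2 := by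
    have : δ ≤ ε / (4 * mu) := min_le_right _ _
    rw [hH]
    rw [le_div_iff₀ (by positivity)] at this
    nlinarith
  have hmue : mu * ε₁ = ε / 2 := by
    rw [hε₁]
    field_simp
  have hbound : S + |t - u N| ≤ max T (mu * d + ε) := by
    rcases le_or_gt (T - S) (2 * H) with hm | hm
    · have : |t - u N| ≤ 2 * H := le_trans hfin (by rw [max_eq_right hm])
      refine le_max_of_le_right ?_
      have : S + |t - u N| ≤ mu * (d + ε₁) + 2 * H := by linarith
      have e2 : mu * (d + ε₁) = mu * d + ε / 2 := by rw [mul_add, hmue]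
      linarith
    · have : |t - u N| ≤ T - S := le_trans hfin (by rw [max_eq_left hm.le])
      exact le_max_of_le_left (by linarith)
  refine le_trans hbound ?_
  have hmT : T ≤ mu * max T d := by
    calc T ≤ mu * T := by nlinarith
      _ ≤ mu * max T d := mul_le_mul_of_nonneg_left (le_max_left _ _) hmu0.le
  have hmd : mu * d ≤ mu * max T d := mul_le_mul_of_nonneg_left (le_max_right _ _) hmu0.le
  apply max_le <;> linarith

lemma nd_bddBelow {X : Type*} [MetricSpace X] (I : Set ℝ) (f : ℝ → ℝ) (p q : ℝ × X) :
    BddBelow { r | ∃ n σ, WPChain I f p q n σ ∧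
      r = ∑ i ∈ Finset.range (n + 1), |(σ (i + 1)).1 - (σ i).1| } := by
  refine ⟨0, fun r hr => ?_⟩
  obtain ⟨n, σ, _, rfl⟩ := hr
  exact Finset.sum_nonneg fun i _ => abs_nonneg _

lemma nullDist_symm {X : Type*} [MetricSpace X] (I : Set ℝ) (f : ℝ → ℝ) (p q : ℝ × X) :
    nullDist I f p q = nullDist I f q p := by
  unfold nullDist
  congr 1
  exact Set.Subset.antisymm (nd_set_symm I f p q) (nd_set_symm I f q p)

lemma nd_set_nonempty {X : Type*} [MetricSpace X]
    (hX : ∀ x y : X, ∀ ε : ℝ, 0 < ε →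
      ∃ z : X, max (dist x z) (dist z y) ≤ dist x y / 2 + ε)
    {I : Set ℝ} (hIc : I.OrdConnected)
    {a b : ℝ} (ha : a ∈ I) (hb : b ∈ I) (hab : a < b)
    {f : ℝ → ℝ} {mu : ℝ} (hmu : 1 ≤ mu) (hfI : ∀ t ∈ I, 1 / mu ≤ f t ∧ f t ≤ mu)
    (p q : ℝ × X) (hp : p.1 ∈ I) (hq : q.1 ∈ I) :
    Set.Nonempty { r | ∃ n σ, WPChain I f p q n σ ∧
      r = ∑ i ∈ Finset.range (n + 1), |(σ (i + 1)).1 - (σ i).1| } := by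
  rcases le_total p.1 q.1 with hle | hle
  · obtain ⟨r, hr, _⟩ := nd_chain_exists hX hIc ha hb hab hmu hfI p q hp hq hle 1 one_pos
    exact ⟨r, hr⟩
  · obtain ⟨r, hr, _⟩ := nd_chain_exists hX hIc ha hb hab hmu hfI q p hq hp hle 1 one_pos
    exact ⟨r, nd_set_symm I f q p hr⟩

lemma nd_ge {X : Type*} [MetricSpace X]
    (hX : ∀ x y : X, ∀ ε : ℝ, 0 < ε →
      ∃ z : X, max (dist x z) (dist z y) ≤ dist x y / 2 + ε)
    {I : Set ℝ} (hIc : I.OrdConnected)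
    {a b : ℝ} (ha : a ∈ I) (hb : b ∈ I) (hab : a < b)
    {f : ℝ → ℝ} {mu : ℝ} (hmu : 1 ≤ mu) (hfI : ∀ t ∈ I, 1 / mu ≤ f t ∧ f t ≤ mu)
    (p q : ℝ × X) (hp : p.1 ∈ I) (hq : q.1 ∈ I) :
    max |q.1 - p.1| (dist p.2 q.2 / mu) ≤ nullDist I f p q :=
  le_csInf (nd_set_nonempty hX hIc ha hb hab hmu hfI p q hp hq)
    (fun _ hr => nd_mem_lower hIc (lt_of_lt_of_le one_pos hmu) hfI p q hr)

lemma nd_le {X : Type*} [MetricSpace X]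
    (hX : ∀ x y : X, ∀ ε : ℝ, 0 < ε →
      ∃ z : X, max (dist x z) (dist z y) ≤ dist x y / 2 + ε)
    {I : Set ℝ} (hIc : I.OrdConnected)
    {a b : ℝ} (ha : a ∈ I) (hb : b ∈ I) (hab : a < b)
    {f : ℝ → ℝ} {mu : ℝ} (hmu : 1 ≤ mu) (hfI : ∀ t ∈ I, 1 / mu ≤ f t ∧ f t ≤ mu)
    (p q : ℝ × X) (hp : p.1 ∈ I) (hq : q.1 ∈ I) :
    nullDist I f p q ≤ mu * max |q.1 - p.1| (dist p.2 q.2) := by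
  have hmu0 : (0:ℝ) < mu := lt_of_lt_of_le one_pos hmu
  rcases le_total p.1 q.1 with hle | hle
  · refine le_of_forall_pos_le_add fun ε hε => ?_
    obtain ⟨r, hr, hrb⟩ := nd_chain_exists hX hIc ha hb hab hmu hfI p q hp hq hle ε hε
    refine le_trans (csInf_le (nd_bddBelow I f p q) hr) (le_trans hrb ?_)
    refine add_le_add_left (mul_le_mul_of_nonneg_left ?_ hmu0.le) ε
    exact max_le_max (le_abs_self _) le_rfl
  · rw [nullDist_symm]
    refine le_of_forall_pos_le_add fun ε hε => ?_
    obtain ⟨r, hr, hrb⟩ := nd_chain_exists hX hIc ha hb hab hmu hfI q p hq hp hle ε hε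
    refine le_trans (csInf_le (nd_bddBelow I f q p) hr) (le_trans hrb ?_)
    refine add_le_add_left (mul_le_mul_of_nonneg_left ?_ hmu0.le) ε
    rw [dist_comm q.2 p.2, abs_sub_comm q.1 p.1]
    exact max_le_max (le_abs_self _) le_rfl

/-- for a length space `X`, a closed nondegenerate interval `I`, `λ > 1` and
warping functions `f_j` with `1/λ ≤ f_j ≤ λ` on `I`, for all `j` and `p ≠ q` in `I × X`:
`1/λ ≤ d̂_{f_j}(p,q) / d̂_σ(p,q) ≤ λ`. -/
theorem stmt8 {X : Type*} [MetricSpace X]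
    (hX : ∀ x y : X, ∀ ε : ℝ, 0 < ε →
      ∃ z : X, max (dist x z) (dist z y) ≤ dist x y / 2 + ε)
    (I : Set ℝ) (hIclosed : IsClosed I) (hIc : I.OrdConnected)
    (hInd : ∃ a ∈ I, ∃ b ∈ I, a < b)
    (lam : ℝ) (hlam : 1 < lam)
    (f : ℕ → ℝ → ℝ) (hf : ∀ j, Measurable (f j))
    (hbd : ∀ j, ∀ t ∈ I, 1 / lam ≤ f j t ∧ f j t ≤ lam) :
    ∀ j : ℕ, ∀ p q : ℝ × X, p.1 ∈ I → q.1 ∈ I → p ≠ q →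
      1 / lam ≤ nullDist I (f j) p q / nullDist I (fun _ => (1 : ℝ)) p q ∧
      nullDist I (f j) p q / nullDist I (fun _ => (1 : ℝ)) p q ≤ lam := by
  obtain ⟨a, ha, b, hb, hab⟩ := hInd
  intro j p q hp hq hne
  have hlam0 : (0:ℝ) < lam := lt_trans one_pos hlam
  have h1I : ∀ t ∈ I, 1 / (1:ℝ) ≤ (fun _ : ℝ => (1:ℝ)) t ∧ (fun _ : ℝ => (1:ℝ)) t ≤ (1:ℝ) := by
    intro t _
    norm_num
  set M := max |q.1 - p.1| (dist p.2 q.2) with hM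
  have hM0 : 0 < M := by
    rcases lt_or_ge 0 M with h | h
    · exact h
    · exfalso
      apply hne
      have h1 : |q.1 - p.1| ≤ 0 := le_trans (le_max_left _ _) h
      have h2 : dist p.2 q.2 ≤ 0 := le_trans (le_max_right _ _) h
      have e1 : p.1 = q.1 := by
        have := abs_nonneg (q.1 - p.1)
        have h3 : |q.1 - p.1| = 0 := le_antisymm h1 this
        have := abs_eq_zero.mp h3
        linarith [sub_eq_zero.mp this]
      have e2 : p.2 = q.2 := by
        have := dist_nonneg (x := p.2) (y := q.2)
        exact dist_le_zero.mp h2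
      exact Prod.ext e1 e2
  have hD1 : nullDist I (fun _ => (1 : ℝ)) p q = M := by
    refine le_antisymm ?_ ?_
    · have := nd_le hX hIc ha hb hab le_rfl h1I p q hp hq
      rwa [one_mul] at this
    · have := nd_ge hX hIc ha hb hab le_rfl h1I p q hp hq
      rwa [div_one] at this
  have hDfu : nullDist I (f j) p q ≤ lam * M :=
    nd_le hX hIc ha hb hab hlam.le (hbd j) p q hp hq
  have hDfl : M / lam ≤ nullDist I (f j) p q := by
    refine le_trans ?_ (nd_ge hX hIc ha hb hab hlam.le (hbd j) p q hp hq)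
    rw [hM, ← max_div_div_right hlam0.le]
    exact max_le_max (div_le_self (abs_nonneg _) hlam.le) le_rfl
  rw [hD1]
  constructor
  · rw [le_div_iff₀ hM0]
    calc 1 / lam * M = M / lam := by ring
      _ ≤ _ := hDfl
  · rw [div_le_iff₀ hM0]
    exact hDfu
end

section
/- Let M be a set equipped with two metrics d₁ and d₂ that induce the same topology on M, and let K ⊆ M be compact in this topology. Suppose every point p ∈ K has an open neighborhood U_p such that d₂(x,y) ≤ d₁(x,y) for all x, y ∈ U_p. Then there exists a constant C > 0 such that d₂(p,q) ≤ C · d₁(p,q) for all p, q ∈ K. -/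
/-- `d` is a metric on `X` (nonnegativity follows from these axioms). -/
def IsMetricOn {X : Type*} (d : X → X → ℝ) : Prop :=
  (∀ p q, d p q = 0 ↔ p = q) ∧ (∀ p q, d p q = d q p) ∧
    ∀ p q r, d p r ≤ d p q + d q r

/-- The metrics `d₁` and `d₂` induce the same topology on `X` (mutual ball containment). -/
def SameTopology {X : Type*} (d₁ d₂ : X → X → ℝ) : Prop :=
  ∀ p : X, ∀ ε : ℝ, 0 < ε →
    (∃ δ > 0, ∀ q, d₁ p q < δ → d₂ p q < ε) ∧
    (∃ δ > 0, ∀ q, d₂ p q < δ → d₁ p q < ε)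

/-- if `d₁`, `d₂` are metrics on `X` inducing the same topology, `K` is a
compact subset (sequential compactness in this common topology), and every point of `K`
has a neighborhood on which `d₂ ≤ d₁`, then there is `C > 0` with `d₂ ≤ C·d₁` on `K`. -/
theorem stmt9 {X : Type*} (d₁ d₂ : X → X → ℝ)
    (hm₁ : IsMetricOn d₁) (hm₂ : IsMetricOn d₂)
    (htop : SameTopology d₁ d₂)
    (K : Set X)
    (hK : ∀ u : ℕ → X, (∀ n, u n ∈ K) → ∃ x ∈ K, ∃ φ : ℕ → ℕ, StrictMono φ ∧
      ∀ ε : ℝ, 0 < ε → ∃ N, ∀ n ≥ N, d₁ (u (φ n)) x < ε)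
    (hloc : ∀ p ∈ K, ∃ δ > 0, ∀ x y : X, d₁ p x < δ → d₁ p y < δ → d₂ x y ≤ d₁ x y) :
    ∃ C > 0, ∀ p ∈ K, ∀ q ∈ K, d₂ p q ≤ C * d₁ p q := by
  obtain ⟨h₁eq, h₁sym, h₁tri⟩ := hm₁
  obtain ⟨h₂eq, h₂sym, h₂tri⟩ := hm₂
  have h₁nn : ∀ p q, 0 ≤ d₁ p q := by
    intro p q
    have h := h₁tri p q p
    rw [(h₁eq p p).2 rfl, h₁sym q p] at h
    linarith
  have h₂nn : ∀ p q, 0 ≤ d₂ p q := by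
    intro p q
    have h := h₂tri p q p
    rw [(h₂eq p p).2 rfl, h₂sym q p] at h
    linarith
  by_contra h
  push_neg at h
  have hc : ∀ n : ℕ, ∃ p ∈ K, ∃ q ∈ K, ((n : ℝ) + 1) * d₁ p q < d₂ p q := by
    intro n
    obtain ⟨p, hp, q, hq, hpq⟩ := h ((n : ℝ) + 1) (by positivity)
    exact ⟨p, hp, q, hq, hpq⟩
  choose u hu v hv hlt using hc
  obtain ⟨x, hxK, φ, hφ, hconvx⟩ := hK u hu
  obtain ⟨y, hyK, ψ, hψ, hconvy⟩ := hK (fun n => v (φ n)) (fun n => hv (φ n))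
  set σ : ℕ → ℕ := fun n => φ (ψ n) with hσdef
  have hσge : ∀ n, n ≤ σ n := fun n => (hψ.id_le n).trans (hφ.id_le (ψ n))
  have hconva : ∀ ε : ℝ, 0 < ε → ∃ N, ∀ n ≥ N, d₁ (u (σ n)) x < ε := by
    intro ε hε
    obtain ⟨N, hN⟩ := hconvx ε hε
    exact ⟨N, fun n hn => hN (ψ n) ((hψ.id_le n).trans' hn)⟩
  have hconvb : ∀ ε : ℝ, 0 < ε → ∃ N, ∀ n ≥ N, d₁ (v (σ n)) y < ε := hconvy
  by_cases hxy : x = y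
  · -- limit points coincide: use the local estimate at x
    obtain ⟨δ, hδ, hl⟩ := hloc x hxK
    obtain ⟨N₁, hN₁⟩ := hconva δ hδ
    obtain ⟨N₂, hN₂⟩ := hconvb δ hδ
    set n := max N₁ N₂
    set a := u (σ n)
    set b := v (σ n)
    have ha : d₁ x a < δ := by rw [h₁sym]; exact hN₁ n (le_max_left _ _)
    have hb : d₁ x b < δ := by rw [h₁sym, hxy]; exact hN₂ n (le_max_right _ _)
    have hle : d₂ a b ≤ d₁ a b := hl a b ha hb
    have hgt : ((σ n : ℝ) + 1) * d₁ a b < d₂ a b := hlt (σ n)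
    have h1 : (1 : ℝ) * d₁ a b ≤ ((σ n : ℝ) + 1) * d₁ a b :=
      mul_le_mul_of_nonneg_right (le_add_of_nonneg_left (Nat.cast_nonneg _)) (h₁nn a b)
    linarith
  · -- limit points distinct
    have hr : 0 < d₁ x y := by
      rcases lt_or_eq_of_le (h₁nn x y) with h' | h'
      · exact h'
      · exact absurd ((h₁eq x y).1 h'.symm) hxy
    set r := d₁ x y with hrdef
    obtain ⟨δ₁, hδ₁, hb₁⟩ := (htop x 1 one_pos).1
    obtain ⟨δ₂, hδ₂, hb₂⟩ := (htop y 1 one_pos).1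
    set D := d₂ x y + 2 with hDdef
    obtain ⟨n₀, hn₀⟩ := exists_nat_gt (D / (r / 2))
    have hn₀' : D < ((n₀ : ℝ) + 1) * (r / 2) := by
      have : D / (r / 2) < (n₀ : ℝ) + 1 := hn₀.trans_le (by linarith)
      calc D = D / (r / 2) * (r / 2) := by field_simp
        _ < ((n₀ : ℝ) + 1) * (r / 2) := by
            apply mul_lt_mul_of_pos_right this; linarith
    obtain ⟨N₁, hN₁⟩ := hconva δ₁ hδ₁
    obtain ⟨N₂, hN₂⟩ := hconva (r / 4) (by linarith)
    obtain ⟨N₃, hN₃⟩ := hconvb δ₂ hδ₂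
    obtain ⟨N₄, hN₄⟩ := hconvb (r / 4) (by linarith)
    set n := max (max N₁ N₂) (max (max N₃ N₄) n₀)
    set a := u (σ n)
    set b := v (σ n)
    have hxa1 : d₂ x a < 1 := by
      apply hb₁; rw [h₁sym]
      exact hN₁ n ((le_max_left N₁ N₂).trans (le_max_left _ _))
    have hyb1 : d₂ y b < 1 := by
      apply hb₂; rw [h₁sym]
      exact hN₃ n (((le_max_left N₃ N₄).trans (le_max_left _ _)).trans (le_max_right _ _))
    have hxa : d₁ x a < r / 4 := by
      rw [h₁sym]; exact hN₂ n ((le_max_right N₁ N₂).trans (le_max_left _ _))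
    have hyb : d₁ y b < r / 4 := by
      rw [h₁sym]
      exact hN₄ n (((le_max_right N₃ N₄).trans (le_max_left _ _)).trans (le_max_right _ _))
    have hab : r / 2 ≤ d₁ a b := by
      have t1 : d₁ x y ≤ d₁ x a + d₁ a y := h₁tri x a y
      have t2 : d₁ a y ≤ d₁ a b + d₁ b y := h₁tri a b y
      have t3 : d₁ b y = d₁ y b := h₁sym b y
      linarith
    have hd2 : d₂ a b < D := by
      have t1 : d₂ a b ≤ d₂ a x + d₂ x b := h₂tri a x b
      have t2 : d₂ x b ≤ d₂ x y + d₂ y b := h₂tri x y b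
      have t3 : d₂ a x = d₂ x a := h₂sym a x
      rw [hDdef]; linarith
    have hgt : ((σ n : ℝ) + 1) * d₁ a b < d₂ a b := hlt (σ n)
    have hn₀n : ((n₀ : ℝ) + 1) ≤ ((σ n : ℝ) + 1) := by
      have : n₀ ≤ σ n :=
        ((le_max_right (max N₃ N₄) n₀).trans (le_max_right _ _)).trans (hσge n)
      exact_mod_cast Nat.succ_le_succ this
    have hmul : ((n₀ : ℝ) + 1) * (r / 2) ≤ ((σ n : ℝ) + 1) * d₁ a b :=
      mul_le_mul hn₀n hab (by linarith) (by positivity)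
    linarith
end

section
/- Let X be a length space, I ⊆ ℝ a nondegenerate interval, c > 0, and for each j ∈ ℕ let f_j : I → ℝ be a bounded continuous function with f_j(t) ≥ c for all t ∈ I. Assume the sequence (f_j) converges uniformly on I to a (necessarily continuous, bounded, ≥ c) function f_∞. Then the null distances converge pointwise: for all p, q ∈ I × X, lim_{j→∞} d̂_{f_j}(p,q) = d̂_{f_∞}(p,q), where d̂_{f_j} and d̂_{f_∞} are the null distances of the warped products I ×_{f_j} X and I ×_{f_∞} X. -/
open MeasureTheory

namespace NDAux

open scoped ENNReal

variable {X : Type*} [MetricSpace X]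

/-- The set of null lengths of chains from `p` to `q`. -/
def NDSet (I : Set ℝ) (f : ℝ → ℝ) (p q : ℝ × X) : Set ℝ :=
  { r | ∃ n σ, WPChain I f p q n σ ∧
    r = ∑ i ∈ Finset.range (n + 1), |(σ (i + 1)).1 - (σ i).1| }

lemma nullDist_eq (I : Set ℝ) (f : ℝ → ℝ) (p q : ℝ × X) :
    nullDist I f p q = sInf (NDSet I f p q) := rfl

lemma NDSet.nonneg {I : Set ℝ} {f : ℝ → ℝ} {p q : ℝ × X} {L : ℝ}
    (h : L ∈ NDSet I f p q) : 0 ≤ L := by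
  obtain ⟨n, σ, -, rfl⟩ := h
  exact Finset.sum_nonneg fun i _ => abs_nonneg _

lemma ndset_bddBelow (I : Set ℝ) (f : ℝ → ℝ) (p q : ℝ × X) :
    BddBelow (NDSet I f p q) := ⟨0, fun _ hL => NDSet.nonneg hL⟩

lemma NDSet.step {I : Set ℝ} {f : ℝ → ℝ} {p q : ℝ × X}
    (hp : p.1 ∈ I) (hq : q.1 ∈ I)
    (h : WPCausal f p q ∨ WPCausal f q p) : |q.1 - p.1| ∈ NDSet I f p q := by
  refine ⟨0, fun i => if i = 0 then p else q, ⟨rfl, rfl, ?_, ?_⟩, ?_⟩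
  · intro i hi
    interval_cases i <;> simpa
  · intro i hi
    interval_cases i
    simpa using h
  · simp

lemma NDSet.trans {I : Set ℝ} {f : ℝ → ℝ} {p q r : ℝ × X} {L₁ L₂ : ℝ}
    (h₁ : L₁ ∈ NDSet I f p q) (h₂ : L₂ ∈ NDSet I f q r) :
    L₁ + L₂ ∈ NDSet I f p r := by
  obtain ⟨n, σ, ⟨hσ0, hσ1, hσI, hσs⟩, rfl⟩ := h₁
  obtain ⟨m, τ, ⟨hτ0, hτ1, hτI, hτs⟩, rfl⟩ := h₂
  set ρ : ℕ → ℝ × X := fun i => if i ≤ n then σ i else τ (i - (n + 1)) with hρ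
  have hρσ : ∀ i ≤ n + 1, ρ i = σ i := by
    intro i hi
    rcases Nat.lt_or_ge i (n + 1) with h | h
    · simp [hρ, Nat.lt_succ_iff.mp h]
    · have : i = n + 1 := le_antisymm hi h
      subst this
      simp [hρ, hσ1, hτ0]
  have hρτ : ∀ j, ρ (n + 1 + j) = τ j := by
    intro j
    have : ¬ (n + 1 + j ≤ n) := by omega
    simp [hρ, this]
  refine ⟨n + 1 + m, ρ, ⟨?_, ?_, ?_, ?_⟩, ?_⟩
  · rw [hρσ 0 (by omega), hσ0]
  · have : n + 1 + m + 1 = n + 1 + (m + 1) := by omega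
    rw [this, hρτ, hτ1]
  · intro i hi
    rcases le_or_gt i (n + 1) with h | h
    · rw [hρσ i h]; exact hσI i h
    · have hj : i = n + 1 + (i - (n + 1)) := by omega
      rw [hj, hρτ]
      exact hτI _ (by omega)
  · intro i hi
    rcases le_or_gt i n with h | h
    · rw [hρσ i (by omega), hρσ (i + 1) (by omega)]
      exact hσs i h
    · have hj : i = n + 1 + (i - (n + 1)) := by omega
      have hj1 : i + 1 = n + 1 + (i - (n + 1) + 1) := by omega
      have e1 : ρ i = τ (i - (n + 1)) := by
        have := hρτ (i - (n + 1)); rwa [← hj] at this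
      have e2 : ρ (i + 1) = τ (i - (n + 1) + 1) := by
        have := hρτ (i - (n + 1) + 1); rwa [← hj1] at this
      rw [e1, e2]
      exact hτs _ (by omega)
  · have hsplit : n + 1 + m + 1 = (n + 1) + (m + 1) := by omega
    rw [hsplit]
    rw [Finset.sum_range_add (fun i => |(ρ (i + 1)).1 - (ρ i).1|) (n + 1) (m + 1)]
    congr 1
    · refine Finset.sum_congr rfl fun i hi => ?_
      have hi' : i < n + 1 := Finset.mem_range.mp hi
      rw [hρσ i (by omega), hρσ (i + 1) (by omega)]
    · refine Finset.sum_congr rfl fun j hj => ?_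
      have : n + 1 + j + 1 = n + 1 + (j + 1) := by omega
      rw [this, hρτ, hρτ]

lemma NDSet.symm {I : Set ℝ} {f : ℝ → ℝ} {p q : ℝ × X} {L : ℝ}
    (h : L ∈ NDSet I f p q) : L ∈ NDSet I f q p := by
  obtain ⟨n, σ, ⟨hσ0, hσ1, hσI, hσs⟩, rfl⟩ := h
  refine ⟨n, fun i => σ (n + 1 - i), ⟨by simpa using hσ1, by simpa using hσ0,
    fun i hi => hσI _ (by omega), fun i hi => ?_⟩, ?_⟩
  · show WPCausal f (σ (n + 1 - i)) (σ (n + 1 - (i + 1))) ∨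
      WPCausal f (σ (n + 1 - (i + 1))) (σ (n + 1 - i))
    have h1 : n + 1 - i = (n - i) + 1 := by omega
    have h2 : n + 1 - (i + 1) = n - i := by omega
    rw [h1, h2]
    exact (hσs (n - i) (by omega)).symm
  · rw [← Finset.sum_range_reflect]
    refine Finset.sum_congr rfl fun i hi => ?_
    have hi' : i < n + 1 := Finset.mem_range.mp hi
    show |(σ (n + 1 - 1 - i + 1)).1 - (σ (n + 1 - 1 - i)).1| =
      |(σ (n + 1 - (i + 1))).1 - (σ (n + 1 - i)).1|
    have h1 : n + 1 - 1 - i + 1 = n + 1 - i := by omega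
    have h2 : n + 1 - 1 - i = n + 1 - (i + 1) := by omega
    rw [h1, h2, abs_sub_comm]



/-- integral appearing in the causal relation -/
noncomputable def WPI (f : ℝ → ℝ) (s t : ℝ) : ℝ≥0∞ :=
  ∫⁻ u in Set.Ioc s t, ENNReal.ofReal ((f u)⁻¹)

lemma WPI_le {I : Set ℝ} {g : ℝ → ℝ} {c : ℝ} (hc : 0 < c)
    (hg : ∀ u ∈ I, c ≤ g u) {s t : ℝ} (hsub : Set.Ioc s t ⊆ I) :
    WPI g s t ≤ ENNReal.ofReal c⁻¹ * ENNReal.ofReal (t - s) := by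
  have h1 : WPI g s t ≤ ∫⁻ _ in Set.Ioc s t, ENNReal.ofReal c⁻¹ := by
    refine setLIntegral_mono' measurableSet_Ioc fun u hu => ?_
    refine ENNReal.ofReal_le_ofReal ?_
    exact inv_anti₀ hc (hg u (hsub hu))
  calc WPI g s t ≤ ∫⁻ _ in Set.Ioc s t, ENNReal.ofReal c⁻¹ := h1
    _ = ENNReal.ofReal c⁻¹ * ENNReal.ofReal (t - s) := by
        rw [setLIntegral_const, Real.volume_Ioc]

lemma WPI_ge {I : Set ℝ} {g : ℝ → ℝ} {c M : ℝ} (hc : 0 < c) (hM : 0 < M)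
    (hgc : ∀ u ∈ I, c ≤ g u) (hgM : ∀ u ∈ I, g u ≤ M)
    {s t : ℝ} (hsub : Set.Ioc s t ⊆ I) :
    ENNReal.ofReal (M⁻¹ * (t - s)) ≤ WPI g s t := by
  rcases le_or_gt t s with h | h
  · have : M⁻¹ * (t - s) ≤ 0 :=
      mul_nonpos_of_nonneg_of_nonpos (by positivity) (sub_nonpos.mpr h)
    simp [ENNReal.ofReal_eq_zero.mpr this]
  · have h2 : (∫⁻ _ in Set.Ioc s t, ENNReal.ofReal M⁻¹) ≤ WPI g s t := by
      refine setLIntegral_mono' measurableSet_Ioc fun u hu => ?_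
      refine ENNReal.ofReal_le_ofReal ?_
      exact inv_anti₀ (lt_of_lt_of_le hc (hgc u (hsub hu))) (hgM u (hsub hu))
    calc ENNReal.ofReal (M⁻¹ * (t - s))
        = ENNReal.ofReal M⁻¹ * ENNReal.ofReal (t - s) :=
          ENNReal.ofReal_mul (by positivity)
      _ = ∫⁻ _ in Set.Ioc s t, ENNReal.ofReal M⁻¹ := by
          rw [setLIntegral_const, Real.volume_Ioc]
      _ ≤ WPI g s t := h2

lemma WPI_add {f : ℝ → ℝ} {s r t : ℝ} (hsr : s ≤ r) (hrt : r ≤ t) :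
    WPI f s t = WPI f s r + WPI f r t := by
  unfold WPI
  rw [← Set.Ioc_union_Ioc_eq_Ioc hsr hrt]
  exact lintegral_union measurableSet_Ioc (Set.Ioc_disjoint_Ioc_of_le le_rfl)

lemma WPI_cmp {I : Set ℝ} {f g : ℝ → ℝ} {δ : ℝ} (hδ : 0 ≤ δ)
    (h : ∀ u ∈ I, (f u)⁻¹ ≤ (1 + δ) * (g u)⁻¹) {s t : ℝ} (hsub : Set.Ioc s t ⊆ I) :
    WPI f s t ≤ ENNReal.ofReal (1 + δ) * WPI g s t := by
  have h1 : WPI f s t ≤ ∫⁻ u in Set.Ioc s t,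
      ENNReal.ofReal (1 + δ) * ENNReal.ofReal ((g u)⁻¹) := by
    refine setLIntegral_mono' measurableSet_Ioc fun u hu => ?_
    rw [← ENNReal.ofReal_mul (by positivity)]
    exact ENNReal.ofReal_le_ofReal (h u (hsub hu))
  calc WPI f s t ≤ _ := h1
    _ = ENNReal.ofReal (1 + δ) * WPI g s t :=
        lintegral_const_mul' _ _ ENNReal.ofReal_ne_top



/-- dyadic approximate chains in a length space -/
lemma ls_chain (hX : ∀ x y : X, ∀ ε : ℝ, 0 < ε →
      ∃ z : X, max (dist x z) (dist z y) ≤ dist x y / 2 + ε) :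
    ∀ (n : ℕ) (x y : X) (δ : ℝ), 0 < δ →
      ∃ z : ℕ → X, z 0 = x ∧ z (2 ^ n) = y ∧
        ∀ i < 2 ^ n, dist (z i) (z (i + 1)) ≤ dist x y / 2 ^ n + δ := by
  intro n
  induction n with
  | zero =>
    intro x y δ hδ
    refine ⟨fun i => if i = 0 then x else y, by simp, by simp, ?_⟩
    intro i hi
    interval_cases i
    simp [hδ.le]
  | succ n ih =>
    intro x y δ hδ
    obtain ⟨m, hm⟩ := hX x y ((2 ^ n : ℝ) * δ / 2) (by positivity)
    obtain ⟨z₁, hz₁0, hz₁1, hz₁⟩ := ih x m (δ / 2) (by positivity)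
    obtain ⟨z₂, hz₂0, hz₂1, hz₂⟩ := ih m y (δ / 2) (by positivity)
    have h2n : (0:ℝ) < 2 ^ n := by positivity
    have hbound : ∀ w w' : X, dist w w' ≤ dist x y / 2 + 2 ^ n * δ / 2 →
        dist w w' / 2 ^ n + δ / 2 ≤ dist x y / 2 ^ (n + 1) + δ := by
      intro w w' hww
      calc dist w w' / 2 ^ n + δ / 2
          ≤ (dist x y / 2 + 2 ^ n * δ / 2) / 2 ^ n + δ / 2 := by gcongr
        _ = dist x y / 2 ^ (n + 1) + δ := by
            rw [pow_succ]
            field_simp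
            ring
    set zc : ℕ → X := fun i => if i ≤ 2 ^ n then z₁ i else z₂ (i - 2 ^ n) with hzc
    have hzcl : ∀ i ≤ 2 ^ n, zc i = z₁ i := fun i hi => if_pos hi
    have hzcr : ∀ i, 2 ^ n < i → zc i = z₂ (i - 2 ^ n) := fun i hi => if_neg (by omega)
    have hpow : 2 ^ (n + 1) = 2 ^ n + 2 ^ n := by rw [pow_succ]; omega
    have hp1 : 1 ≤ 2 ^ n := Nat.one_le_two_pow
    refine ⟨zc, by rw [hzcl 0 (by positivity), hz₁0], ?_, ?_⟩
    · rw [hzcr (2 ^ (n + 1)) (by omega)]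
      have : 2 ^ (n + 1) - 2 ^ n = 2 ^ n := by omega
      rw [this, hz₂1]
    · intro i hi
      rcases lt_trichotomy i (2 ^ n) with h | h | h
      · rw [hzcl i h.le, hzcl (i + 1) h]
        calc dist (z₁ i) (z₁ (i + 1)) ≤ dist x m / 2 ^ n + δ / 2 := hz₁ i h
          _ ≤ dist x y / 2 ^ (n + 1) + δ :=
            hbound x m (le_trans (le_max_left _ _) hm)
      · subst h
        rw [hzcl (2 ^ n) le_rfl, hzcr (2 ^ n + 1) (by omega)]
        have e : 2 ^ n + 1 - 2 ^ n = 1 := by omega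
        rw [e, hz₁1, ← hz₂0]
        calc dist (z₂ 0) (z₂ 1) ≤ dist m y / 2 ^ n + δ / 2 := hz₂ 0 (by positivity)
          _ ≤ dist x y / 2 ^ (n + 1) + δ :=
            hbound m y (le_trans (le_max_right _ _) hm)
      · rw [hzcr i h, hzcr (i + 1) (by omega)]
        have e : i + 1 - 2 ^ n = (i - 2 ^ n) + 1 := by omega
        rw [e]
        calc dist (z₂ (i - 2 ^ n)) (z₂ (i - 2 ^ n + 1)) ≤ dist m y / 2 ^ n + δ / 2 :=
            hz₂ _ (by omega)
          _ ≤ dist x y / 2 ^ (n + 1) + δ :=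
            hbound m y (le_trans (le_max_right _ _) hm)

/-- approximate intermediate points -/
lemma ls_mid (hX : ∀ x y : X, ∀ ε : ℝ, 0 < ε →
      ∃ z : X, max (dist x z) (dist z y) ≤ dist x y / 2 + ε)
    (x y : X) {α δ : ℝ} (hα0 : 0 ≤ α) (hαd : α ≤ dist x y) (hδ : 0 < δ) :
    ∃ w : X, dist x w ≤ α ∧ dist w y ≤ dist x y - α + 3 * δ := by
  rcases eq_or_lt_of_le (dist_nonneg : (0:ℝ) ≤ dist x y) with hd | hd
  · refine ⟨x, by simpa using hα0, ?_⟩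
    have hα : α = 0 := le_antisymm (hd ▸ hαd) hα0
    rw [hα]
    linarith
  · set d := dist x y with hdd
    obtain ⟨n, hn⟩ := pow_unbounded_of_one_lt (d / δ) (by norm_num : (1:ℝ) < 2)
    have h2n : (0:ℝ) < 2 ^ n := by positivity
    have hdn : d / 2 ^ n < δ := by
      rw [div_lt_iff₀ h2n]
      rw [div_lt_iff₀ hδ] at hn
      nlinarith
    obtain ⟨z, hz0, hz1, hz⟩ := ls_chain hX n x y (δ / 2 ^ n) (by positivity)
    set β : ℝ := d / 2 ^ n + δ / 2 ^ n with hβ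
    have hβpos : 0 < β := by positivity
    have hβδ : β ≤ 2 * δ := by
      have h1 : (1:ℝ) ≤ 2 ^ n := one_le_pow₀ (by norm_num)
      have h2 : δ / 2 ^ n ≤ δ := by
        calc δ / 2 ^ n ≤ δ / 1 := by gcongr
          _ = δ := div_one δ
      rw [hβ]
      linarith
    have hβsum : (2 ^ n : ℝ) * β = d + δ := by
      rw [hβ]
      field_simp
    set k : ℕ := ⌊α / β⌋₊ with hk
    have hkβ : (k : ℝ) * β ≤ α := by
      rw [← le_div_iff₀ hβpos]
      exact Nat.floor_le (by positivity)
    have hkβ' : α < ((k : ℝ) + 1) * β := by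
      have h := Nat.lt_floor_add_one (α / β)
      exact_mod_cast (div_lt_iff₀ hβpos).mp h
    have hk2n : k ≤ 2 ^ n := by
      have hr : (k : ℝ) ≤ (2 ^ n : ℕ) := by
        push_cast
        nlinarith
      exact_mod_cast hr
    refine ⟨z k, ?_, ?_⟩
    · calc dist x (z k) = dist (z 0) (z k) := by rw [hz0]
        _ ≤ ∑ i ∈ Finset.range k, dist (z i) (z (i + 1)) := dist_le_range_sum_dist z k
        _ ≤ ∑ i ∈ Finset.range k, β :=
          Finset.sum_le_sum fun i hi => hz i (by
            have := Finset.mem_range.mp hi; omega)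
        _ = (k : ℝ) * β := by rw [Finset.sum_const, Finset.card_range, nsmul_eq_mul]
        _ ≤ α := hkβ
    · have hky : dist (z k) y ≤ ((2 ^ n - k : ℕ) : ℝ) * β := by
        have h0 : dist (z k) y = dist ((fun i => z (k + i)) 0) ((fun i => z (k + i)) (2 ^ n - k)) := by
          simp only []
          rw [Nat.add_zero]
          congr 1
          rw [← hz1]
          congr 1
          omega
        rw [h0]
        calc dist ((fun i => z (k + i)) 0) ((fun i => z (k + i)) (2 ^ n - k))
            ≤ ∑ i ∈ Finset.range (2 ^ n - k), dist (z (k + i)) (z (k + i + 1)) :=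
              dist_le_range_sum_dist (fun i => z (k + i)) (2 ^ n - k)
          _ ≤ ∑ i ∈ Finset.range (2 ^ n - k), β :=
              Finset.sum_le_sum fun i hi => hz _ (by
                have := Finset.mem_range.mp hi; omega)
          _ = ((2 ^ n - k : ℕ) : ℝ) * β := by
              rw [Finset.sum_const, Finset.card_range, nsmul_eq_mul]
      have hcast : ((2 ^ n - k : ℕ) : ℝ) = (2 ^ n : ℝ) - k := by
        push_cast [Nat.cast_sub hk2n]
        norm_num
      calc dist (z k) y ≤ ((2 ^ n - k : ℕ) : ℝ) * β := hky
        _ = (2 ^ n : ℝ) * β - (k : ℝ) * β := by rw [hcast]; ring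
        _ = d + δ - (k : ℝ) * β := by rw [hβsum]
        _ ≤ d + δ - (α - β) := by nlinarith
        _ = d - α + δ + β := by ring
        _ ≤ d - α + 3 * δ := by linarith


lemma segment_replace {I : Set ℝ} (hIc : I.OrdConnected)
    (hX : ∀ x y : X, ∀ ε : ℝ, 0 < ε →
      ∃ z : X, max (dist x z) (dist z y) ≤ dist x y / 2 + ε)
    {f g : ℝ → ℝ} {c M δ : ℝ} (hc : 0 < c) (hM : 0 < M) (hδ0 : 0 < δ) (hδ1 : δ ≤ 1)
    (hgc : ∀ u ∈ I, c ≤ g u) (hgM : ∀ u ∈ I, g u ≤ M)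
    (hfg : ∀ u ∈ I, (f u)⁻¹ ≤ (1 + δ) * (g u)⁻¹)
    {s t : ℝ} {x y : X} (hs : s ∈ I) (ht : t ∈ I)
    (hcaus : WPCausal f (s, x) (t, y))
    {η : ℝ} (hη : 0 < η) :
    ∃ L ∈ NDSet I g ((s, x) : ℝ × X) (t, y), L ≤ (t - s) * (1 + δ * M / c) + η := by
  have hst : s ≤ t := hcaus.1
  have hsub : Set.Ioc s t ⊆ I := Set.Ioc_subset_Icc_self.trans (hIc.out hs ht)
  have hgtop : WPI g s t ≠ ⊤ := by
    exact ne_top_of_le_ne_top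
      (ENNReal.mul_ne_top ENNReal.ofReal_ne_top ENNReal.ofReal_ne_top)
      (WPI_le hc hgc hsub)
  obtain ⟨Bg, hBg⟩ : ∃ b : ℝ, b = (WPI g s t).toReal := ⟨_, rfl⟩
  have hBg0 : 0 ≤ Bg := hBg ▸ ENNReal.toReal_nonneg
  have h1δ : (0:ℝ) < 1 + δ := by linarith
  have hdub : dist x y ≤ (1 + δ) * Bg := by
    have h1 : ENNReal.ofReal (dist x y) ≤ ENNReal.ofReal (1 + δ) * WPI g s t :=
      le_trans hcaus.2 (WPI_cmp hδ0.le hfg hsub)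
    have h2 : (ENNReal.ofReal (1 + δ) * WPI g s t) ≠ ⊤ :=
      ENNReal.mul_ne_top ENNReal.ofReal_ne_top hgtop
    have h3 := (ENNReal.ofReal_le_iff_le_toReal h2).mp h1
    rw [hBg]
    rwa [ENNReal.toReal_mul, ENNReal.toReal_ofReal h1δ.le] at h3
  have hBgle : Bg ≤ c⁻¹ * (t - s) := by
    have h1 := WPI_le hc hgc hsub
    have h2 := ENNReal.toReal_mono (ENNReal.mul_ne_top ENNReal.ofReal_ne_top
      ENNReal.ofReal_ne_top) h1
    rw [hBg]
    rwa [ENNReal.toReal_mul, ENNReal.toReal_ofReal (by positivity),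
      ENNReal.toReal_ofReal (by linarith)] at h2
  have hKpos : (0:ℝ) ≤ δ * M / c := by positivity
  rcases le_or_gt (dist x y) Bg with hcase | hcase
  · -- direct causal step
    have hc1 : WPCausal g (s, x) (t, y) :=
      ⟨hst, ENNReal.ofReal_le_of_le_toReal (hBg ▸ hcase)⟩
    refine ⟨|t - s|, NDSet.step hs ht (Or.inl hc1), ?_⟩
    rw [abs_of_nonneg (by linarith)]
    nlinarith
  · -- deficit case
    have hslt : s < t := by
      rcases eq_or_lt_of_le hst with h | h
      · exfalso
        have hioc : Set.Ioc s t = ∅ := by rw [← h]; exact Set.Ioc_self s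
        have hBg0' : Bg = 0 := by
          rw [hBg]
          unfold WPI
          rw [hioc]
          simp
        rw [hBg0'] at hcase hdub
        nlinarith [dist_nonneg (x := x) (y := y)]
      · exact h
    have hBgpos : 0 < Bg := by
      have h1 := WPI_ge hc hM hgc hgM hsub
      have h2 : (0:ℝ) < M⁻¹ * (t - s) := by
        have := sub_pos.mpr hslt
        positivity
      have h3 : (0:ℝ≥0∞) < WPI g s t :=
        lt_of_lt_of_le (by simpa [ENNReal.ofReal_pos] using h2) h1
      rw [hBg]
      exact ENNReal.toReal_pos h3.ne' hgtop
    obtain ⟨D, hD⟩ : ∃ d : ℝ, d = dist x y - Bg := ⟨_, rfl⟩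
    have hD0 : 0 < D := hD ▸ sub_pos.mpr hcase
    have hDδ : D ≤ δ * Bg := by nlinarith
    have hDBg : D ≤ Bg := by nlinarith
    obtain ⟨ε₂, hε₂⟩ : ∃ e : ℝ, e = min (η / (2 * M)) (Bg / 2) := ⟨_, rfl⟩
    have hε₂0 : 0 < ε₂ := hε₂ ▸ lt_min (by positivity) (by positivity)
    obtain ⟨r, hr⟩ : ∃ r : ℝ, r = max s (t - M * (D / 2 + ε₂)) := ⟨_, rfl⟩
    have hrs : s ≤ r := hr ▸ le_max_left _ _
    have hrt : r ≤ t := hr ▸ max_le hst (by nlinarith)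
    have hrI : r ∈ I := hIc.out hs ht ⟨hrs, hrt⟩
    have hsubrt : Set.Ioc r t ⊆ I := Set.Ioc_subset_Icc_self.trans (hIc.out hrI ht)
    have hcost : t - r ≤ M * (D / 2 + ε₂) := by
      have h1 := le_max_right s (t - M * (D / 2 + ε₂))
      rw [← hr] at h1
      linarith
    have hbudget : ENNReal.ofReal (D / 2 + ε₂) ≤ WPI g r t := by
      rcases le_or_gt s (t - M * (D / 2 + ε₂)) with h | h
      · have hre : r = t - M * (D / 2 + ε₂) := by rw [hr]; exact max_eq_right h
        have h1 := WPI_ge hc hM hgc hgM hsubrt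
        have h2 : M⁻¹ * (t - r) = D / 2 + ε₂ := by
          rw [hre]
          field_simp
          ring
        rwa [h2] at h1
      · have hre : r = s := by rw [hr]; exact max_eq_left h.le
        have h1 : D / 2 + ε₂ ≤ Bg := by
          have h2 : ε₂ ≤ Bg / 2 := by rw [hε₂]; exact min_le_right _ _
          linarith
        rw [hre]
        calc ENNReal.ofReal (D / 2 + ε₂) ≤ ENNReal.ofReal Bg :=
            ENNReal.ofReal_le_ofReal h1
          _ = WPI g s t := by rw [hBg]; exact ENNReal.ofReal_toReal hgtop
    -- pick intermediate points
    obtain ⟨w, hw1, hw2⟩ := ls_mid hX x y (α := Bg) hBg0 hcase.le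
      (δ := ε₂ / 6) (by positivity)
    have hw2' : dist w y ≤ D + ε₂ / 2 := by rw [hD]; linarith
    obtain ⟨w', hw'1, hw'2⟩ := ls_mid hX w y (α := dist w y / 2)
      (by positivity) (by linarith [dist_nonneg (x := w) (y := y)])
      (δ := ε₂ / 8) (by positivity)
    have hww' : dist w w' ≤ D / 2 + ε₂ := by linarith
    have hw'y : dist w' y ≤ D / 2 + ε₂ := by linarith
    -- three steps
    have step1 : WPCausal g ((s, x) : ℝ × X) (t, w) := by
      refine ⟨hst, ?_⟩
      show ENNReal.ofReal (dist x w) ≤ WPI g s t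
      exact ENNReal.ofReal_le_of_le_toReal (le_trans hw1 (le_of_eq hBg))
    have step2 : WPCausal g ((r, w') : ℝ × X) (t, w) := by
      refine ⟨hrt, ?_⟩
      show ENNReal.ofReal (dist w' w) ≤ WPI g r t
      refine le_trans (ENNReal.ofReal_le_ofReal ?_) hbudget
      rw [dist_comm]
      exact hww'
    have step3 : WPCausal g ((r, w') : ℝ × X) (t, y) := by
      refine ⟨hrt, ?_⟩
      show ENNReal.ofReal (dist w' y) ≤ WPI g r t
      exact le_trans (ENNReal.ofReal_le_ofReal hw'y) hbudget
    have m1 : |((t, w) : ℝ × X).1 - ((s, x) : ℝ × X).1| ∈ NDSet I g ((s, x) : ℝ × X) (t, w) :=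
      NDSet.step hs ht (Or.inl step1)
    have m2 : |((r, w') : ℝ × X).1 - ((t, w) : ℝ × X).1| ∈ NDSet I g ((t, w) : ℝ × X) (r, w') :=
      NDSet.step ht hrI (Or.inr step2)
    have m3 : |((t, y) : ℝ × X).1 - ((r, w') : ℝ × X).1| ∈ NDSet I g ((r, w') : ℝ × X) (t, y) :=
      NDSet.step hrI ht (Or.inl step3)
    refine ⟨_, NDSet.trans (NDSet.trans m1 m2) m3, ?_⟩
    clear m1 m2 m3 step1 step2 step3 hbudget hgtop hcaus hfg hgc hgM
    have e1 : |((t, w) : ℝ × X).1 - ((s, x) : ℝ × X).1| = t - s := by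
      show |t - s| = t - s
      exact abs_of_nonneg (by linarith)
    have e2 : |((r, w') : ℝ × X).1 - ((t, w) : ℝ × X).1| = t - r := by
      show |r - t| = t - r
      rw [abs_sub_comm]
      exact abs_of_nonneg (by linarith)
    have e3 : |((t, y) : ℝ × X).1 - ((r, w') : ℝ × X).1| = t - r := by
      show |t - r| = t - r
      exact abs_of_nonneg (by linarith)
    rw [e1, e2, e3]
    have hε₂η : ε₂ ≤ η / (2 * M) := by rw [hε₂]; exact min_le_left _ _
    have hMD : t - r ≤ M * D / 2 + M * ε₂ := by
      calc t - r ≤ M * (D / 2 + ε₂) := hcost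
        _ = M * D / 2 + M * ε₂ := by ring
    have hfin : M * D ≤ δ * M / c * (t - s) := by
      have h1 : D ≤ δ * (c⁻¹ * (t - s)) := by
        calc D ≤ δ * Bg := hDδ
          _ ≤ δ * (c⁻¹ * (t - s)) := mul_le_mul_of_nonneg_left hBgle hδ0.le
      have h2 : M * D ≤ M * (δ * (c⁻¹ * (t - s))) := mul_le_mul_of_nonneg_left h1 hM.le
      calc M * D ≤ M * (δ * (c⁻¹ * (t - s))) := h2
        _ = δ * M / c * (t - s) := by field_simp
    have hMε : 2 * (M * ε₂) ≤ η := by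
      have h2 : M * ε₂ ≤ M * (η / (2 * M)) := mul_le_mul_of_nonneg_left hε₂η hM.le
      have h3 : M * (η / (2 * M)) = η / 2 := by
        field_simp
      linarith
    linarith

lemma inv_cmp {a b k : ℝ} (ha : 0 < a) (hb : 0 < b) (h : a ≤ k * b) : b⁻¹ ≤ k * a⁻¹ := by
  rw [← div_eq_mul_inv, le_div_iff₀ ha, inv_mul_eq_div, div_le_iff₀ hb]
  exact h

lemma step_replace {I : Set ℝ} (hIc : I.OrdConnected)
    (hX : ∀ x y : X, ∀ ε : ℝ, 0 < ε →
      ∃ z : X, max (dist x z) (dist z y) ≤ dist x y / 2 + ε)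
    {f g : ℝ → ℝ} {c M δ : ℝ} (hc : 0 < c) (hM : 0 < M) (hδ0 : 0 < δ) (hδ1 : δ ≤ 1)
    (hgc : ∀ u ∈ I, c ≤ g u) (hgM : ∀ u ∈ I, g u ≤ M)
    (hfg : ∀ u ∈ I, (f u)⁻¹ ≤ (1 + δ) * (g u)⁻¹)
    {a b : ℝ × X} (ha : a.1 ∈ I) (hb : b.1 ∈ I)
    (h : WPCausal f a b ∨ WPCausal f b a) {η : ℝ} (hη : 0 < η) :
    ∃ L ∈ NDSet I g a b, L ≤ |b.1 - a.1| * (1 + δ * M / c) + η := by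
  have hKpos : (0:ℝ) ≤ 1 + δ * M / c := by positivity
  rcases h with h | h
  · obtain ⟨L, hL, hle⟩ := segment_replace hIc hX hc hM hδ0 hδ1 hgc hgM hfg
      (s := a.1) (t := b.1) (x := a.2) (y := b.2) ha hb h hη
    refine ⟨L, hL, ?_⟩
    rw [abs_of_nonneg (by linarith [h.1])]
    exact hle
  · obtain ⟨L, hL, hle⟩ := segment_replace hIc hX hc hM hδ0 hδ1 hgc hgM hfg
      (s := b.1) (t := a.1) (x := b.2) (y := a.2) hb ha h hη
    refine ⟨L, NDSet.symm hL, ?_⟩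
    rw [abs_sub_comm, abs_of_nonneg (by linarith [h.1])]
    exact hle

lemma chain_replace {I : Set ℝ} (hIc : I.OrdConnected)
    (hX : ∀ x y : X, ∀ ε : ℝ, 0 < ε →
      ∃ z : X, max (dist x z) (dist z y) ≤ dist x y / 2 + ε)
    {f g : ℝ → ℝ} {c M δ : ℝ} (hc : 0 < c) (hM : 0 < M) (hδ0 : 0 < δ) (hδ1 : δ ≤ 1)
    (hgc : ∀ u ∈ I, c ≤ g u) (hgM : ∀ u ∈ I, g u ≤ M)
    (hfg : ∀ u ∈ I, (f u)⁻¹ ≤ (1 + δ) * (g u)⁻¹) :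
    ∀ (n : ℕ) (p q : ℝ × X) (σ : ℕ → ℝ × X), WPChain I f p q n σ → ∀ η : ℝ, 0 < η →
      ∃ L ∈ NDSet I g p q,
        L ≤ (∑ i ∈ Finset.range (n + 1), |(σ (i + 1)).1 - (σ i).1|) * (1 + δ * M / c) + η := by
  intro n
  induction n with
  | zero =>
    intro p q σ hchain η hη
    obtain ⟨h0, h1, hI, hstep⟩ := hchain
    obtain ⟨L, hL, hle⟩ := step_replace hIc hX hc hM hδ0 hδ1 hgc hgM hfg
      (a := σ 0) (b := σ 1) (hI 0 (by omega)) (hI 1 (by omega)) (hstep 0 (by omega)) hη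
    rw [h0, h1] at hL
    refine ⟨L, hL, ?_⟩
    rw [Finset.sum_range_one]
    exact hle
  | succ n ih =>
    intro p q σ hchain η hη
    obtain ⟨h0, h1, hI, hstep⟩ := hchain
    have hchain' : WPChain I f p (σ (n + 1)) n σ :=
      ⟨h0, rfl, fun i hi => hI i (by omega), fun i hi => hstep i (by omega)⟩
    obtain ⟨L₁, hL₁, hle₁⟩ := ih p (σ (n + 1)) σ hchain' (η / 2) (by positivity)
    obtain ⟨L₂, hL₂, hle₂⟩ := step_replace hIc hX hc hM hδ0 hδ1 hgc hgM hfg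
      (a := σ (n + 1)) (b := σ (n + 2)) (hI (n + 1) (by omega)) (hI (n + 2) (by omega))
      (hstep (n + 1) (by omega)) (η := η / 2) (by positivity)
    rw [h1] at hL₂
    refine ⟨L₁ + L₂, NDSet.trans hL₁ hL₂, ?_⟩
    rw [Finset.sum_range_succ]
    have hA : (∑ i ∈ Finset.range (n + 1), |(σ (i + 1)).1 - (σ i).1| +
        |(σ (n + 1 + 1)).1 - (σ (n + 1)).1|) * (1 + δ * M / c)
        = (∑ i ∈ Finset.range (n + 1), |(σ (i + 1)).1 - (σ i).1|) * (1 + δ * M / c) +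
          |(σ (n + 1 + 1)).1 - (σ (n + 1)).1| * (1 + δ * M / c) := by ring
    rw [hA]
    have e2 : (n + 2) = (n + 1 + 1) := by omega
    rw [e2] at hle₂
    linarith

lemma nullDist_le_cmp {I : Set ℝ} (hIc : I.OrdConnected)
    (hX : ∀ x y : X, ∀ ε : ℝ, 0 < ε →
      ∃ z : X, max (dist x z) (dist z y) ≤ dist x y / 2 + ε)
    {f g : ℝ → ℝ} {c M δ : ℝ} (hc : 0 < c) (hM : 0 < M) (hδ0 : 0 < δ) (hδ1 : δ ≤ 1)
    (hgc : ∀ u ∈ I, c ≤ g u) (hgM : ∀ u ∈ I, g u ≤ M)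
    (hfg : ∀ u ∈ I, (f u)⁻¹ ≤ (1 + δ) * (g u)⁻¹)
    {p q : ℝ × X} (hne : (NDSet I f p q).Nonempty) {η : ℝ} (hη : 0 < η) :
    nullDist I g p q ≤ nullDist I f p q * (1 + δ * M / c) + η := by
  have hK : (0:ℝ) < 1 + δ * M / c := by positivity
  obtain ⟨L, hL, hLlt⟩ := Real.lt_sInf_add_pos hne
    (show (0:ℝ) < η / (2 * (1 + δ * M / c)) by positivity)
  obtain ⟨n, σ, hchain, rfl⟩ := hL
  obtain ⟨L', hL', hle⟩ := chain_replace hIc hX hc hM hδ0 hδ1 hgc hgM hfg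
    n p q σ hchain (η / 2) (by positivity)
  rw [nullDist_eq]
  refine le_trans (csInf_le (ndset_bddBelow I g p q) hL') ?_
  have h1 : (∑ i ∈ Finset.range (n + 1), |(σ (i + 1)).1 - (σ i).1|) * (1 + δ * M / c)
      ≤ (sInf (NDSet I f p q) + η / (2 * (1 + δ * M / c))) * (1 + δ * M / c) :=
    mul_le_mul_of_nonneg_right hLlt.le hK.le
  have h2 : (sInf (NDSet I f p q) + η / (2 * (1 + δ * M / c))) * (1 + δ * M / c)
      = sInf (NDSet I f p q) * (1 + δ * M / c) + η / 2 := by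
    field_simp
  rw [nullDist_eq]
  linarith

lemma mem_of_min {I : Set ℝ} {x y : ℝ} (hx : x ∈ I) (hy : y ∈ I) : min x y ∈ I := by
  rcases le_total x y with h | h
  · rwa [min_eq_left h]
  · rwa [min_eq_right h]

lemma mem_of_max {I : Set ℝ} {x y : ℝ} (hx : x ∈ I) (hy : y ∈ I) : max x y ∈ I := by
  rcases le_total x y with h | h
  · rwa [max_eq_right h]
  · rwa [max_eq_left h]

lemma ndset_nonempty {I : Set ℝ} (hIc : I.OrdConnected)
    (hX : ∀ x y : X, ∀ ε : ℝ, 0 < ε →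
      ∃ z : X, max (dist x z) (dist z y) ≤ dist x y / 2 + ε)
    {f : ℝ → ℝ} {c M : ℝ} (hc : 0 < c) (hM : 0 < M)
    (hfc : ∀ u ∈ I, c ≤ f u) (hfM : ∀ u ∈ I, f u ≤ M)
    {a b : ℝ} (ha : a ∈ I) (hb : b ∈ I) (hab : a < b)
    (p q : ℝ × X) (hp : p.1 ∈ I) (hq : q.1 ∈ I) :
    (NDSet I f p q).Nonempty := by
  obtain ⟨u, hu_def⟩ : ∃ u : ℝ, u = min (min a p.1) q.1 := ⟨_, rfl⟩
  obtain ⟨v, hv_def⟩ : ∃ v : ℝ, v = max (max b p.1) q.1 := ⟨_, rfl⟩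
  have hu : u ∈ I := by rw [hu_def]; exact mem_of_min (mem_of_min ha hp) hq
  have hv : v ∈ I := by rw [hv_def]; exact mem_of_max (mem_of_max hb hp) hq
  have hua : u ≤ a := by rw [hu_def]; exact le_trans (min_le_left _ _) (min_le_left _ _)
  have hbv : b ≤ v := by rw [hv_def]; exact le_trans (le_max_left _ _) (le_max_left _ _)
  have hpv : p.1 ≤ v := by rw [hv_def]; exact le_trans (le_max_right _ _) (le_max_left _ _)
  have hqv : q.1 ≤ v := by rw [hv_def]; exact le_max_right _ _
  have hup : u ≤ p.1 := by rw [hu_def]; exact le_trans (min_le_left _ _) (min_le_right _ _)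
  have huq : u ≤ q.1 := by rw [hu_def]; exact min_le_right _ _
  have huv : u < v := lt_of_le_of_lt hua (lt_of_lt_of_le hab hbv)
  have hsub : Set.Ioc u v ⊆ I := Set.Ioc_subset_Icc_self.trans (hIc.out hu hv)
  obtain ⟨β, hβ_def⟩ : ∃ β : ℝ, β = M⁻¹ * (v - u) := ⟨_, rfl⟩
  have hβpos : 0 < β := by
    rw [hβ_def]
    have := sub_pos.mpr huv
    positivity
  have hbudget : ENNReal.ofReal β ≤ WPI f u v := by
    rw [hβ_def]
    exact WPI_ge hc hM hfc hfM hsub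
  have key : ∀ z z' : X, dist z z' ≤ β → WPCausal f ((u, z) : ℝ × X) (v, z') := by
    intro z z' hd
    exact ⟨huv.le, le_trans (ENNReal.ofReal_le_ofReal hd) hbudget⟩
  have hop : ∀ z z' : X, dist z z' ≤ β →
      ∀ L ∈ NDSet I f p ((v, z) : ℝ × X), (L + (v - u) + (v - u)) ∈ NDSet I f p (v, z') := by
    intro z z' hd L hL
    have m1 : |((u, z') : ℝ × X).1 - ((v, z) : ℝ × X).1| ∈
        NDSet I f ((v, z) : ℝ × X) (u, z') :=
      NDSet.step hv hu (Or.inr (key z' z (by rwa [dist_comm])))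
    have m2 : |((v, z') : ℝ × X).1 - ((u, z') : ℝ × X).1| ∈
        NDSet I f ((u, z') : ℝ × X) (v, z') :=
      NDSet.step hu hv (Or.inl (key z' z' (by simp [hβpos.le])))
    have e1 : |((u, z') : ℝ × X).1 - ((v, z) : ℝ × X).1| = v - u := by
      show |u - v| = v - u
      rw [abs_sub_comm]
      exact abs_of_nonneg (by linarith)
    have e2 : |((v, z') : ℝ × X).1 - ((u, z') : ℝ × X).1| = v - u := by
      show |v - u| = v - u
      exact abs_of_nonneg (by linarith)
    have := NDSet.trans (NDSet.trans hL m1) m2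
    rwa [e1, e2] at this
  -- dyadic chain from p.2 to q.2
  obtain ⟨n, hn⟩ := pow_unbounded_of_one_lt (dist p.2 q.2 / (β / 2)) (by norm_num : (1:ℝ) < 2)
  have h2n : (0:ℝ) < 2 ^ n := by positivity
  obtain ⟨z, hz0, hz1, hz⟩ := ls_chain hX n p.2 q.2 (β / 2) (by positivity)
  have hzstep : ∀ i < 2 ^ n, dist (z i) (z (i + 1)) ≤ β := by
    intro i hi
    have h1 := hz i hi
    have h2 : dist p.2 q.2 / 2 ^ n ≤ β / 2 := by
      rw [div_le_iff₀ h2n]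
      rw [div_lt_iff₀ (by positivity : (0:ℝ) < β / 2)] at hn
      nlinarith
    linarith
  -- initial segment : p to (v, p.2)
  have hstart : WPCausal f p ((v, p.2) : ℝ × X) := by
    refine ⟨hpv, ?_⟩
    have : dist p.2 ((v, p.2) : ℝ × X).2 = 0 := by simp
    rw [this]
    simp
  have hm0 : |((v, p.2) : ℝ × X).1 - p.1| ∈ NDSet I f p ((v, p.2) : ℝ × X) :=
    NDSet.step hp hv (Or.inl hstart)
  have claim : ∀ i, i ≤ 2 ^ n → ∃ L, L ∈ NDSet I f p ((v, z i) : ℝ × X) := by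
    intro i
    induction i with
    | zero =>
      intro _
      rw [hz0]
      exact ⟨_, hm0⟩
    | succ i ih =>
      intro hi
      obtain ⟨L, hL⟩ := ih (by omega)
      exact ⟨_, hop (z i) (z (i + 1)) (hzstep i (by omega)) L hL⟩
  obtain ⟨L, hL⟩ := claim (2 ^ n) le_rfl
  rw [hz1] at hL
  have hend : WPCausal f q ((v, q.2) : ℝ × X) := by
    refine ⟨hqv, ?_⟩
    have : dist q.2 ((v, q.2) : ℝ × X).2 = 0 := by simp
    rw [this]
    simp
  have hmend : |q.1 - ((v, q.2) : ℝ × X).1| ∈ NDSet I f ((v, q.2) : ℝ × X) q :=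
    NDSet.step hv hq (Or.inr hend)
  exact ⟨_, NDSet.trans hL hmend⟩

end NDAux

set_option maxHeartbeats 1000000 in
open NDAux in
/-- for a length space `X`, a nondegenerate interval `I` and bounded
continuous warping functions `f_j ≥ c > 0` converging uniformly on `I` to `f_∞`, the null
distances converge pointwise: `d̂_{f_j}(p,q) → d̂_{f_∞}(p,q)` for all `p, q ∈ I × X`. -/
theorem stmt10 {X : Type*} [MetricSpace X]
    (hX : ∀ x y : X, ∀ ε : ℝ, 0 < ε →
      ∃ z : X, max (dist x z) (dist z y) ≤ dist x y / 2 + ε)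
    (I : Set ℝ) (hIc : I.OrdConnected) (hInd : ∃ a ∈ I, ∃ b ∈ I, a < b)
    (c : ℝ) (hc : 0 < c)
    (f : ℕ → ℝ → ℝ) (flim : ℝ → ℝ)
    (hcont : ∀ j, ContinuousOn (f j) I)
    (hbdd : ∀ j, ∃ B : ℝ, ∀ t ∈ I, f j t ≤ B)
    (hlow : ∀ j, ∀ t ∈ I, c ≤ f j t)
    (hunif : TendstoUniformlyOn f flim Filter.atTop I) :
    ∀ p q : ℝ × X, p.1 ∈ I → q.1 ∈ I →
      Filter.Tendsto (fun j => nullDist I (f j) p q) Filter.atTop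
        (nhds (nullDist I flim p q)) := by
  obtain ⟨a, ha, b, hb, hab⟩ := hInd
  -- the limit function is bounded below by c on I
  have hlimc : ∀ t ∈ I, c ≤ flim t := by
    intro t ht
    exact ge_of_tendsto (hunif.tendsto_at ht)
      (Filter.Eventually.of_forall fun j => hlow j t ht)
  -- choose a uniform upper bound M
  obtain ⟨N, hN⟩ := ((Metric.tendstoUniformlyOn_iff.mp hunif) 1 one_pos).exists
  obtain ⟨B, hB⟩ := hbdd N
  have hcB : c ≤ B := le_trans (hlow N a ha) (hB a ha)
  obtain ⟨M, hM_def⟩ : ∃ m : ℝ, m = B + 2 := ⟨_, rfl⟩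
  have hM : 0 < M := by rw [hM_def]; linarith
  have hcM : c ≤ M := by rw [hM_def]; linarith
  have hlimB : ∀ t ∈ I, flim t ≤ B + 1 := by
    intro t ht
    have h1 := hN t ht
    rw [Real.dist_eq] at h1
    have h2 := abs_lt.mp h1
    have h3 := hB t ht
    linarith [h2.2]
  have hlimM : ∀ t ∈ I, flim t ≤ M := by
    intro t ht
    rw [hM_def]
    linarith [hlimB t ht]
  intro p q hp hq
  rw [Metric.tendsto_atTop]
  intro ε hε
  obtain ⟨ε₀, hε₀_def⟩ : ∃ e : ℝ, e = min ε 1 := ⟨_, rfl⟩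
  have hε₀pos : 0 < ε₀ := by rw [hε₀_def]; exact lt_min hε one_pos
  have hε₀ε : ε₀ ≤ ε := by rw [hε₀_def]; exact min_le_left _ _
  have hε₀1 : ε₀ ≤ 1 := by rw [hε₀_def]; exact min_le_right _ _
  obtain ⟨dInf, hdInf_def⟩ : ∃ d : ℝ, d = nullDist I flim p q := ⟨_, rfl⟩
  have hdInf0 : 0 ≤ dInf := by
    rw [hdInf_def, nullDist_eq]
    exact Real.sInf_nonneg fun x hx => NDSet.nonneg hx
  obtain ⟨δ, hδ_def⟩ : ∃ d : ℝ, d = min (c / (2 * M)) (ε₀ * c / (8 * M * (dInf + 1))) := ⟨_, rfl⟩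
  have hδ0 : 0 < δ := by
    rw [hδ_def]
    refine lt_min (by positivity) (by positivity)
  have hδ1 : δ ≤ 1 := by
    have h1 : δ ≤ c / (2 * M) := by rw [hδ_def]; exact min_le_left _ _
    have h2 : c / (2 * M) ≤ 1 := by
      rw [div_le_one (by positivity)]
      linarith
    linarith
  obtain ⟨K, hK_def⟩ : ∃ k : ℝ, k = δ * M / c := ⟨_, rfl⟩
  have hK0 : 0 ≤ K := by rw [hK_def]; positivity
  have hK2 : K ≤ ε₀ / (8 * (dInf + 1)) := by
    have h1 : δ ≤ ε₀ * c / (8 * M * (dInf + 1)) := by rw [hδ_def]; exact min_le_right _ _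
    rw [le_div_iff₀ (by positivity : (0:ℝ) < 8 * M * (dInf + 1))] at h1
    rw [hK_def, div_le_div_iff₀ (by positivity) (by positivity)]
    nlinarith
  have hK3 : K * (dInf + 1) ≤ ε₀ / 8 := by
    calc K * (dInf + 1) ≤ ε₀ / (8 * (dInf + 1)) * (dInf + 1) :=
        mul_le_mul_of_nonneg_right hK2 (by linarith)
      _ = ε₀ / 8 := by field_simp
  obtain ⟨γ, hγ_def⟩ : ∃ g : ℝ, g = min 1 (δ * c) := ⟨_, rfl⟩
  have hγ0 : 0 < γ := by rw [hγ_def]; exact lt_min one_pos (by positivity)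
  have hγ1 : γ ≤ 1 := by rw [hγ_def]; exact min_le_left _ _
  have hγδc : γ ≤ δ * c := by rw [hγ_def]; exact min_le_right _ _
  obtain ⟨J, hJ⟩ := Filter.eventually_atTop.mp
    ((Metric.tendstoUniformlyOn_iff.mp hunif) γ hγ0)
  refine ⟨J, fun j hj => ?_⟩
  have hjγ : ∀ t ∈ I, |flim t - f j t| < γ := by
    intro t ht
    have := hJ j hj t ht
    rwa [Real.dist_eq] at this
  have hfjM : ∀ t ∈ I, f j t ≤ M := by
    intro t ht
    have h1 := abs_lt.mp (hjγ t ht)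
    have h2 := hlimB t ht
    rw [hM_def]
    linarith [h1.1]
  have cmp1 : ∀ u ∈ I, (flim u)⁻¹ ≤ (1 + δ) * (f j u)⁻¹ := by
    intro u hu
    have h1 := abs_lt.mp (hjγ u hu)
    have h2 := hlimc u hu
    have h3 := hlow j u hu
    refine inv_cmp (by linarith) (by linarith) ?_
    nlinarith [h1.1]
  have cmp2 : ∀ u ∈ I, (f j u)⁻¹ ≤ (1 + δ) * (flim u)⁻¹ := by
    intro u hu
    have h1 := abs_lt.mp (hjγ u hu)
    have h2 := hlimc u hu
    have h3 := hlow j u hu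
    refine inv_cmp (by linarith) (by linarith) ?_
    nlinarith [h1.2]
  have hne1 : (NDSet I flim p q).Nonempty :=
    ndset_nonempty hIc hX hc hM hlimc hlimM ha hb hab p q hp hq
  have hne2 : (NDSet I (f j) p q).Nonempty :=
    ndset_nonempty hIc hX hc hM (hlow j) hfjM ha hb hab p q hp hq
  have hup : nullDist I (f j) p q ≤ nullDist I flim p q * (1 + δ * M / c) + ε₀ / 8 :=
    nullDist_le_cmp hIc hX hc hM hδ0 hδ1 (hlow j) hfjM cmp1 hne1 (by positivity)
  have hdown : nullDist I flim p q ≤ nullDist I (f j) p q * (1 + δ * M / c) + ε₀ / 8 :=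
    nullDist_le_cmp hIc hX hc hM hδ0 hδ1 hlimc hlimM cmp2 hne2 (by positivity)
  obtain ⟨nj, hnj_def⟩ : ∃ m : ℝ, m = nullDist I (f j) p q := ⟨_, rfl⟩
  have hnj0 : 0 ≤ nj := by
    rw [hnj_def, nullDist_eq]
    exact Real.sInf_nonneg fun x hx => NDSet.nonneg hx
  rw [← hnj_def, ← hdInf_def, ← hK_def] at hup hdown
  have hup' : nj ≤ dInf + K * (dInf + 1) + ε₀ / 8 := by nlinarith
  have hnj_le : nj ≤ dInf + 1 := by nlinarith
  have hKnj : K * nj ≤ K * (dInf + 1) := mul_le_mul_of_nonneg_left hnj_le hK0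
  have hdown' : dInf ≤ nj + K * (dInf + 1) + ε₀ / 8 := by nlinarith
  show dist (nullDist I (f j) p q) (nullDist I flim p q) < ε
  rw [← hnj_def, ← hdInf_def, Real.dist_eq, abs_lt]
  constructor
  · linarith
  · linarith
end

section
/- Let (X, d₀) be a compact metric space and λ ≥ 1. For each j ∈ ℕ let d_j be a metric on X with (1/λ)·d₀(p,q) ≤ d_j(p,q) ≤ λ·d₀(p,q) for all p, q ∈ X, and assume each d_j has the approximate midpoint property (for all p, q and ε > 0 there is m with max(d_j(p,m), d_j(m,q)) ≤ d_j(p,q)/2 + ε). Then there exist a subsequence (d_{j_k}) and a metric d_∞ on X satisfying (1/λ)·d₀ ≤ d_∞ ≤ λ·d₀ and the approximate midpoint property, such that sup_{p,q ∈ X} |d_{j_k}(p,q) − d_∞(p,q)| → 0 as k → ∞. -/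
/-- uniform-convergence part of the Huang--Lee--Sormani compactness theorem:
on a compact metric space `(X,d₀)`, a sequence of metrics `d_j` that are `λ`-bi-Lipschitz
equivalent to `d₀` and have the approximate midpoint property subconverges uniformly to a
metric `d_∞` with the same bi-Lipschitz bounds and the approximate midpoint property. -/
theorem stmt13 {X : Type*} [MetricSpace X] [CompactSpace X]
    (lam : ℝ) (hlam : 1 ≤ lam)
    (d : ℕ → X → X → ℝ)
    (hmetric : ∀ j, (∀ p q, d j p q = 0 ↔ p = q) ∧ (∀ p q, d j p q = d j q p) ∧
      ∀ p q r, d j p r ≤ d j p q + d j q r)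
    (hbilip : ∀ j, ∀ p q : X,
      (1 / lam) * dist p q ≤ d j p q ∧ d j p q ≤ lam * dist p q)
    (hmid : ∀ j, ∀ p q : X, ∀ ε : ℝ, 0 < ε →
      ∃ m : X, max (d j p m) (d j m q) ≤ d j p q / 2 + ε) :
    ∃ φ : ℕ → ℕ, StrictMono φ ∧ ∃ dinf : X → X → ℝ,
      ((∀ p q, dinf p q = 0 ↔ p = q) ∧ (∀ p q, dinf p q = dinf q p) ∧
        ∀ p q r, dinf p r ≤ dinf p q + dinf q r) ∧
      (∀ p q : X, (1 / lam) * dist p q ≤ dinf p q ∧ dinf p q ≤ lam * dist p q) ∧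
      (∀ p q : X, ∀ ε : ℝ, 0 < ε →
        ∃ m : X, max (dinf p m) (dinf m q) ≤ dinf p q / 2 + ε) ∧
      ∀ ε : ℝ, 0 < ε → ∃ N : ℕ, ∀ k ≥ N, ∀ p q : X,
        |d (φ k) p q - dinf p q| ≤ ε := by
  have hlam0 : (0 : ℝ) < lam := lt_of_lt_of_le one_pos hlam
  have hd_nonneg : ∀ j p q, 0 ≤ d j p q := fun j p q =>
    le_trans (by positivity) (hbilip j p q).1
  -- key uniform Lipschitz estimate
  have hlip : ∀ j (p q p' q' : X),
      dist (d j p q) (d j p' q') ≤ lam * (dist p p' + dist q q') := by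
    intro j p q p' q'
    obtain ⟨heq, hsymm, htri⟩ := hmetric j
    have key : ∀ a b a' b' : X, d j a b - d j a' b' ≤ lam * (dist a a' + dist b b') := by
      intro a b a' b'
      have h1 : d j a b ≤ d j a a' + d j a' b' + d j b' b := by
        calc d j a b ≤ d j a a' + d j a' b := htri a a' b
          _ ≤ d j a a' + (d j a' b' + d j b' b) := by linarith [htri a' b' b]
          _ = d j a a' + d j a' b' + d j b' b := by ring
      have h2 : d j a a' ≤ lam * dist a a' := (hbilip j a a').2
      have h3 : d j b' b ≤ lam * dist b' b := (hbilip j b' b).2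
      rw [dist_comm b' b] at h3
      linarith
    rw [Real.dist_eq, abs_sub_le_iff]
    constructor
    · exact key p q p' q'
    · have := key p' q' p q
      rw [dist_comm p' p, dist_comm q' q] at this
      linarith
  -- diameter bound
  set D : ℝ := Metric.diam (Set.univ : Set X) with hD
  have hdistD : ∀ p q : X, dist p q ≤ D := fun p q =>
    Metric.dist_le_diam_of_mem isCompact_univ.isBounded (Set.mem_univ p) (Set.mem_univ q)
  -- continuous maps on X × X
  have hcont : ∀ j, Continuous (fun pq : X × X => d j pq.1 pq.2) := by
    intro j
    have : LipschitzWith (Real.toNNReal (2 * lam)) (fun pq : X × X => d j pq.1 pq.2) := by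
      apply LipschitzWith.of_dist_le_mul
      intro x y
      have h1 := hlip j x.1 x.2 y.1 y.2
      have h2 : dist x.1 y.1 ≤ dist x y := le_max_left _ _
      have h3 : dist x.2 y.2 ≤ dist x y := le_max_right _ _
      have h4 : ((Real.toNNReal (2 * lam) : NNReal) : ℝ) = 2 * lam :=
        Real.coe_toNNReal _ (by positivity)
      rw [h4]
      nlinarith [dist_nonneg (x := x) (y := y)]
    exact this.continuous
  set F : ℕ → BoundedContinuousFunction (X × X) ℝ := fun j =>
    BoundedContinuousFunction.mkOfCompact ⟨fun pq : X × X => d j pq.1 pq.2, hcont j⟩ with hF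
  have hFval : ∀ j pq, F j pq = d j pq.1 pq.2 := fun j pq => rfl
  -- the equicontinuous bounded family
  set A : Set (BoundedContinuousFunction (X × X) ℝ) :=
    {f | (∀ x y : X × X, dist (f x) (f y) ≤ 2 * lam * dist x y) ∧
      ∀ x, f x ∈ Set.Icc (0 : ℝ) (lam * D)} with hA
  have hFA : ∀ j, F j ∈ A := by
    intro j
    constructor
    · intro x y
      have h1 := hlip j x.1 x.2 y.1 y.2
      have h2 : dist x.1 y.1 ≤ dist x y := le_max_left _ _
      have h3 : dist x.2 y.2 ≤ dist x y := le_max_right _ _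
      rw [hFval, hFval]
      nlinarith [dist_nonneg (x := x) (y := y)]
    · intro x
      rw [hFval]
      refine ⟨hd_nonneg j x.1 x.2, ?_⟩
      calc d j x.1 x.2 ≤ lam * dist x.1 x.2 := (hbilip j x.1 x.2).2
        _ ≤ lam * D := by nlinarith [hdistD x.1 x.2]
  have hcomp : IsCompact (closure A) := by
    apply BoundedContinuousFunction.arzela_ascoli (Set.Icc (0 : ℝ) (lam * D)) isCompact_Icc
    · exact fun f x hf => hf.2 x
    · apply Metric.equicontinuous_of_continuity_modulus (fun t => 2 * lam * t)
      · have : Continuous (fun t : ℝ => 2 * lam * t) := by continuity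
        simpa using this.tendsto 0
      · intro x y i
        exact i.2.1 x y
  obtain ⟨finf, -, φ, hφ, hconv⟩ :=
    hcomp.tendsto_subseq (fun j => subset_closure (hFA j))
  refine ⟨φ, hφ, fun p q => finf (p, q), ?_⟩
  -- uniform convergence statement
  have huc : ∀ ε : ℝ, 0 < ε → ∃ N : ℕ, ∀ k ≥ N, ∀ p q : X,
      |d (φ k) p q - finf (p, q)| ≤ ε := by
    intro ε hε
    rw [Metric.tendsto_atTop] at hconv
    obtain ⟨N, hN⟩ := hconv ε hε
    refine ⟨N, fun k hk p q => ?_⟩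
    have h1 := BoundedContinuousFunction.dist_coe_le_dist (f := F (φ k)) (g := finf) (p, q)
    have h2 := hN k hk
    rw [Function.comp_apply] at h2
    rw [hFval] at h1
    calc |d (φ k) p q - finf (p, q)| = dist (d (φ k) p q) (finf (p, q)) := (Real.dist_eq _ _).symm
      _ ≤ dist (F (φ k)) finf := h1
      _ ≤ ε := le_of_lt h2
  -- pointwise convergence
  have hpt : ∀ p q : X, Filter.Tendsto (fun k => d (φ k) p q) Filter.atTop (nhds (finf (p, q))) := by
    intro p q
    rw [tendsto_iff_dist_tendsto_zero]
    apply squeeze_zero (fun k => dist_nonneg)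
      (fun k => ?_) (tendsto_iff_dist_tendsto_zero.1 hconv)
    have h1 := BoundedContinuousFunction.dist_coe_le_dist (f := F (φ k)) (g := finf) (p, q)
    rw [hFval] at h1
    simpa using h1
  have hbnd : ∀ p q : X, (1 / lam) * dist p q ≤ finf (p, q) ∧ finf (p, q) ≤ lam * dist p q := by
    intro p q
    constructor
    · exact ge_of_tendsto (hpt p q) (Filter.Eventually.of_forall fun k => (hbilip (φ k) p q).1)
    · exact le_of_tendsto (hpt p q) (Filter.Eventually.of_forall fun k => (hbilip (φ k) p q).2)
  refine ⟨⟨?_, ?_, ?_⟩, hbnd, ?_, huc⟩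
  · -- zero iff eq
    intro p q
    constructor
    · intro h
      have h' : finf (p, q) = 0 := h
      have h1 := (hbnd p q).1
      rw [h'] at h1
      have hl : 0 < 1 / lam := by positivity
      have : dist p q ≤ 0 := by nlinarith [dist_nonneg (x := p) (y := q)]
      exact dist_le_zero.mp this
    · intro h
      subst h
      show finf (p, p) = 0
      have h1 := (hbnd p p).1
      have h2 := (hbnd p p).2
      simp only [dist_self, mul_zero] at h1 h2
      linarith
  · -- symmetry
    intro p q
    show finf (p, q) = finf (q, p)
    have : (fun k => d (φ k) p q) = (fun k => d (φ k) q p) := by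
      funext k; exact (hmetric (φ k)).2.1 p q
    exact tendsto_nhds_unique (hpt p q) (this ▸ hpt q p)
  · -- triangle
    intro p q r
    show finf (p, r) ≤ finf (p, q) + finf (q, r)
    exact le_of_tendsto_of_tendsto' (hpt p r) ((hpt p q).add (hpt q r))
      (fun k => (hmetric (φ k)).2.2 p q r)
  · -- approximate midpoints
    intro p q ε hε
    obtain ⟨N, hN⟩ := huc (ε / 4) (by linarith)
    obtain ⟨m, hm⟩ := hmid (φ N) p q (ε / 4) (by linarith)
    refine ⟨m, ?_⟩
    have h1 := hN N le_rfl p m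
    have h2 := hN N le_rfl m q
    have h3 := hN N le_rfl p q
    rw [abs_le] at h1 h2 h3
    rw [max_le_iff] at hm
    show max (finf (p, m)) (finf (m, q)) ≤ finf (p, q) / 2 + ε
    rw [max_le_iff]
    constructor <;> nlinarith [hm.1, hm.2, h1.1, h1.2, h2.1, h2.2, h3.1, h3.2]
end
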